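/- arXiv:1608.07993 — 3 statements merged into one kernel-verified Lean document; each statement's English description precedes it below -/
import Mathlib

section
/- Let W be a group and S a subgroup with exactly k ≥ 2 distinct conjugates S₁, …, S_k. Let C = S₁ ∩ ⋯ ∩ S_k (the normal core of S), let T_i = ⋂_{j ≠ i} S_j for each i, and let N = N_W(S₁) ∩ ⋯ ∩ N_W(S_k). Then each T_i is a normal subgroup of N, the product T₁T₂⋯T_k is a subgroup of N, C is a normal subgroup of T₁⋯T_k, and the quotient (T₁⋯T_k)/C is isomorphic to the direct product (T₁/C) × ⋯ × (T_k/C). -/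
open Pointwise



private lemma conj_map_map {W : Type*} [Group W] (t w : W) (H : Subgroup W) :
    Subgroup.map (MulAut.conj t).toMonoidHom (Subgroup.map (MulAut.conj w).toMonoidHom H) =
      Subgroup.map (MulAut.conj (t * w)).toMonoidHom H := by
  rw [Subgroup.map_map]
  congr 1
  ext x
  simp [mul_assoc]

private lemma conj_map_self {W : Type*} [Group W] {t : W} {H : Subgroup W} (ht : t ∈ H) :
    Subgroup.map (MulAut.conj t).toMonoidHom H = H := by
  ext x
  simp only [Subgroup.mem_map, MulEquiv.coe_toMonoidHom, MulAut.conj_apply]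
  constructor
  · rintro ⟨h, hh, rfl⟩
    exact H.mul_mem (H.mul_mem ht hh) (H.inv_mem ht)
  · intro hx
    exact ⟨t⁻¹ * x * t, H.mul_mem (H.mul_mem (H.inv_mem ht) hx) ht, by group⟩

private lemma mem_normalizer_of_conj_map_eq {W : Type*} [Group W] {t : W} {H : Subgroup W}
    (h : Subgroup.map (MulAut.conj t).toMonoidHom H = H) : t ∈ Subgroup.normalizer (H : Set W) := by
  rw [Subgroup.mem_normalizer_iff]
  intro g
  constructor
  · intro hg
    rw [← h]
    exact ⟨g, hg, by simp⟩
  · intro hg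
    rw [← h] at hg
    obtain ⟨g', hg', he⟩ := hg
    simp only [MulEquiv.coe_toMonoidHom, MulAut.conj_apply] at he
    have : g' = g := by
      have := mul_right_cancel he
      exact mul_left_cancel this
    exact this ▸ hg'

private lemma coe_ofFn_prod {G : Type*} [Group G] (H : Subgroup G) {n : ℕ} (t : Fin n → H) :
    ((List.ofFn t).prod : G) = (List.ofFn fun i => (t i : G)).prod := by
  rw [SubmonoidClass.coe_list_prod, List.map_ofFn]
  rfl

private lemma prod_mem_iSup_iff {G : Type*} [Group G] :
    ∀ (n : ℕ) (K : Fin n → Subgroup G), (∀ i, (K i).Normal) → ∀ w : G,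
      (w ∈ ⨆ i, K i ↔ ∃ t : Fin n → G, (∀ i, t i ∈ K i) ∧ w = (List.ofFn t).prod) := by
  intro n
  induction n with
  | zero =>
    intro K _ w
    rw [iSup_of_empty]
    constructor
    · intro hw
      exact ⟨Fin.elim0, fun i => i.elim0, by simpa using hw⟩
    · rintro ⟨t, _, rfl⟩
      simp
  | succ n IH =>
    intro K hK w
    haveI := hK (Fin.last n)
    have hsplit : (⨆ i, K i) = (⨆ i : Fin n, K i.castSucc) ⊔ K (Fin.last n) := by
      apply le_antisymm
      · refine iSup_le fun i => ?_
        induction i using Fin.lastCases with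
        | last => exact le_sup_right
        | cast i => exact le_trans (le_iSup (fun i : Fin n => K i.castSucc) i) le_sup_left
      · exact sup_le (iSup_le fun i => le_iSup K i.castSucc) (le_iSup K (Fin.last n))
    rw [hsplit]
    constructor
    · intro hw
      have : w ∈ ((⨆ i : Fin n, K i.castSucc : Subgroup G) : Set G) * (K (Fin.last n) : Set G) := by
        rw [← Subgroup.mul_normal]
        exact hw
      obtain ⟨a, ha, b, hb, rfl⟩ := this
      obtain ⟨t0, ht0, rfl⟩ := (IH (fun i => K i.castSucc) (fun i => hK _) a).mp ha
      refine ⟨Fin.snoc t0 b, ?_, ?_⟩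
      · intro i
        induction i using Fin.lastCases with
        | last => simpa using hb
        | cast i => simpa using ht0 i
      · rw [List.ofFn_succ', List.concat_eq_append, List.prod_append]
        simp
    · rintro ⟨t, ht, rfl⟩
      rw [List.ofFn_succ', List.concat_eq_append, List.prod_append]
      simp only [List.prod_cons, List.prod_nil, mul_one]
      have ha : (List.ofFn fun i : Fin n => t i.castSucc).prod ∈ ⨆ i : Fin n, K i.castSucc :=
        (IH (fun i => K i.castSucc) (fun i => hK _) _).mpr ⟨fun i => t i.castSucc,
          fun i => ht _, rfl⟩
      exact Subgroup.mul_mem _ (Subgroup.mem_sup_left ha) (Subgroup.mem_sup_right (ht _))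



/-- The set of all conjugates `wSw⁻¹` of a subgroup `S` of `W`. -/
def subgroupConjugates {W : Type*} [Group W] (S : Subgroup W) : Set (Subgroup W) :=
  Set.range fun w : W => Subgroup.map (MulAut.conj w).toMonoidHom S

/-- Let `S 0, …, S (k-1)` (for `k ≥ 2`) be the distinct conjugates of the subgroup `S 0` of
`W`.  Let `C = ⋂ i, S i` (the normal core), `T i = ⋂_{j ≠ i} S j`, and let `N` be the
intersection of the normalizers of the `S i`.  Then each `T i` is a normal subgroup of `N`,
the product `T 0 ⋯ T (k-1)` is a subgroup `P` of `N`, `C` is a normal subgroup of `P`, and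
`P / C` is isomorphic to the direct product of the quotients `T i / C`. -/
theorem internal_direct_product_of_core_complements {W : Type*} [Group W]
    (k : ℕ) (hk : 2 ≤ k)
    (S : Fin k → Subgroup W) (hinj : Function.Injective S)
    (hconj : Set.range S = subgroupConjugates (S ⟨0, by omega⟩))
    (C : Subgroup W) (hC : C = ⨅ i, S i)
    (T : Fin k → Subgroup W) (hT : ∀ i, T i = ⨅ j ∈ ({i}ᶜ : Set (Fin k)), S j)
    (N : Subgroup W) (hN : N = ⨅ i, Subgroup.normalizer (S i : Set W)) :
    (∀ i, T i ≤ N) ∧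
      (∀ i, ((T i).subgroupOf N).Normal) ∧
      (∃ P : Subgroup W,
        ((P : Set W) =
          {w : W | ∃ t : Fin k → W, (∀ i, t i ∈ T i) ∧ w = (List.ofFn t).prod}) ∧
        P ≤ N ∧
        (C ≤ P ∧ (C.subgroupOf P).Normal) ∧
        (∀ i, C ≤ T i ∧ (C.subgroupOf (T i)).Normal) ∧
        ([_h1 : (C.subgroupOf P).Normal] → [_h2 : ∀ i, (C.subgroupOf (T i)).Normal] →
          Nonempty ((P ⧸ C.subgroupOf P) ≃* ((i : Fin k) → T i ⧸ C.subgroupOf (T i))))) := by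
  have i0 : Fin k := ⟨0, by omega⟩
  -- membership characterizations
  have hTmem : ∀ i w, w ∈ T i ↔ ∀ j, j ≠ i → w ∈ S j := by
    intro i w
    rw [hT i]
    simp only [Subgroup.mem_iInf]
    exact ⟨fun h j hj => h j hj, fun h j hj => h j hj⟩
  have hNmem : ∀ w, w ∈ N ↔ ∀ j, w ∈ Subgroup.normalizer (S j : Set W) := by
    intro w; rw [hN]; exact Subgroup.mem_iInf
  have hCmem : ∀ w, w ∈ C ↔ ∀ j, w ∈ S j := by
    intro w; rw [hC]; exact Subgroup.mem_iInf
  have hconjS : ∀ g ∈ N, ∀ m, ∀ x ∈ S m, g * x * g⁻¹ ∈ S m := fun g hg m x hx =>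
    (Subgroup.mem_normalizer_iff.mp ((hNmem g).mp hg m) x).mp hx
  -- Part 1 : T i ≤ N
  have hTN : ∀ i, T i ≤ N := by
    intro i w hw
    rw [hNmem]
    intro j
    by_cases hj : j = i
    · subst hj
      have hSj : S j ∈ subgroupConjugates (S ⟨0, by omega⟩) := by
        rw [← hconj]; exact ⟨j, rfl⟩
      obtain ⟨u, hu'⟩ := hSj
      have hu : Subgroup.map (MulAut.conj u).toMonoidHom (S ⟨0, by omega⟩) = S j := hu'
      have hmem : Subgroup.map (MulAut.conj w).toMonoidHom (S j) ∈ Set.range S := by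
        rw [hconj]
        refine ⟨w * u, ?_⟩
        show Subgroup.map (MulAut.conj (w * u)).toMonoidHom _ = _
        rw [← conj_map_map, hu]
      obtain ⟨m, hm⟩ := hmem
      by_cases hmj : m = j
      · subst hmj
        exact mem_normalizer_of_conj_map_eq hm.symm
      · exfalso
        have hwm : w ∈ S m := (hTmem j w).mp hw m hmj
        have h1 : Subgroup.map (MulAut.conj w⁻¹).toMonoidHom (S m) = S m :=
          conj_map_self ((S m).inv_mem hwm)
        have h2 : Subgroup.map (MulAut.conj w⁻¹).toMonoidHom (S m) = S j := by
          rw [hm, conj_map_map, inv_mul_cancel]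
          exact conj_map_self (S j).one_mem
        exact hmj (hinj (h1.symm.trans h2))
    · exact Subgroup.le_normalizer ((hTmem i w).mp hw j hj)
  -- Part 2 : normality of T i in N
  have hTnormN : ∀ i, ((T i).subgroupOf N).Normal := by
    intro i
    refine ⟨fun x hx g => ?_⟩
    rw [Subgroup.mem_subgroupOf] at hx ⊢
    simp only [Subgroup.coe_mul, InvMemClass.coe_inv]
    rw [hTmem]
    intro j hj
    exact hconjS (↑g) g.2 j (↑x) ((hTmem i ↑x).mp hx j hj)
  -- auxiliary inclusions
  have hCN : ∀ c ∈ C, ∀ g ∈ N, g * c * g⁻¹ ∈ C := by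
    intro c hc g hg
    rw [hCmem] at hc ⊢
    intro j
    exact hconjS g hg j c (hc j)
  have hCT : ∀ i, C ≤ T i := by
    intro i w hw
    rw [hTmem]
    intro j _
    exact (hCmem w).mp hw j
  have hTS : ∀ a b, b ≠ a → T a ≤ S b := fun a b hba w hw => (hTmem a w).mp hw b hba
  have hTC : ∀ i w, w ∈ T i → w ∈ S i → w ∈ C := by
    intro i w h1 h2
    rw [hCmem]
    intro j
    by_cases hj : j = i
    · exact hj ▸ h2
    · exact (hTmem i w).mp h1 j hj
  have hcommC : ∀ i j, i ≠ j → ∀ a b : W, a ∈ T i → b ∈ T j → b⁻¹ * a⁻¹ * b * a ∈ C := by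
    intro i j hij a b ha hb
    rw [hCmem]
    intro m
    by_cases hmi : m = i
    · -- then m ≠ j, so b ∈ S m
      have hmj : m ≠ j := by rw [hmi]; exact hij
      have hbSm : b ∈ S m := (hTmem j b).mp hb m hmj
      have h1 : a⁻¹ * b * a⁻¹⁻¹ ∈ S m :=
        hconjS a⁻¹ (N.inv_mem (hTN i ha)) m b hbSm
      have h2 : b⁻¹ * (a⁻¹ * b * a⁻¹⁻¹) ∈ S m := (S m).mul_mem ((S m).inv_mem hbSm) h1
      have heq : b⁻¹ * a⁻¹ * b * a = b⁻¹ * (a⁻¹ * b * a⁻¹⁻¹) := by group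
      rw [heq]; exact h2
    · -- m ≠ i, so a ∈ S m
      have haSm : a ∈ S m := (hTmem i a).mp ha m hmi
      have h1 : b⁻¹ * a⁻¹ * b⁻¹⁻¹ ∈ S m :=
        hconjS b⁻¹ (N.inv_mem (hTN j hb)) m a⁻¹ ((S m).inv_mem haSm)
      have h2 : b⁻¹ * a⁻¹ * b⁻¹⁻¹ * a ∈ S m := (S m).mul_mem h1 haSm
      have heq : b⁻¹ * a⁻¹ * b * a = b⁻¹ * a⁻¹ * b⁻¹⁻¹ * a := by group
      rw [heq]; exact h2
  -- Part 3 : the subgroup P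
  set K : Fin k → Subgroup N := fun i => (T i).subgroupOf N with hK
  have hKnorm : ∀ i, (K i).Normal := hTnormN
  set P : Subgroup W := Subgroup.map N.subtype (⨆ i, K i) with hPdef
  have hPN : P ≤ N := Subgroup.map_subtype_le _
  have hPsup : P = ⨆ i, T i := by
    rw [hPdef, Subgroup.map_iSup]
    exact iSup_congr fun i => by
      rw [hK, Subgroup.subgroupOf_map_subtype, inf_eq_left.mpr (hTN i)]
  have hTP : ∀ i, T i ≤ P := by
    intro i; rw [hPsup]; exact le_iSup T i
  have hCP : C ≤ P := (hCT i0).trans (hTP i0)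
  have hPcar : (P : Set W) =
      {w : W | ∃ t : Fin k → W, (∀ i, t i ∈ T i) ∧ w = (List.ofFn t).prod} := by
    ext w
    simp only [Set.mem_setOf_eq, SetLike.mem_coe]
    constructor
    · intro hw
      obtain ⟨x, hx, rfl⟩ := Subgroup.mem_map.mp hw
      obtain ⟨t, ht, hprod⟩ := (prod_mem_iSup_iff k K hKnorm x).mp hx
      refine ⟨fun i => ↑(t i), fun i => Subgroup.mem_subgroupOf.mp (ht i), ?_⟩
      rw [Subgroup.coe_subtype, hprod]
      exact coe_ofFn_prod N t
    · rintro ⟨t, ht, rfl⟩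
      refine ⟨(List.ofFn fun i => (⟨t i, hTN i (ht i)⟩ : N)).prod, ?_, ?_⟩
      · exact (prod_mem_iSup_iff k K hKnorm _).mpr
          ⟨fun i => ⟨t i, hTN i (ht i)⟩, fun i => Subgroup.mem_subgroupOf.mpr (ht i), rfl⟩
      · rw [Subgroup.coe_subtype]
        exact (coe_ofFn_prod N _).trans rfl
  have hCPnorm : (C.subgroupOf P).Normal := by
    refine ⟨fun x hx g => ?_⟩
    rw [Subgroup.mem_subgroupOf] at hx ⊢
    simp only [Subgroup.coe_mul, InvMemClass.coe_inv]
    exact hCN (↑x) hx (↑g) (hPN g.2)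
  have hCTnorm : ∀ i, (C.subgroupOf (T i)).Normal := by
    intro i
    refine ⟨fun x hx g => ?_⟩
    rw [Subgroup.mem_subgroupOf] at hx ⊢
    simp only [Subgroup.coe_mul, InvMemClass.coe_inv]
    exact hCN (↑x) hx (↑g) (hTN i g.2)
  refine ⟨hTN, hTnormN, P, hPcar, hPN, ⟨hCP, hCPnorm⟩, fun i => ⟨hCT i, hCTnorm i⟩, ?_⟩
  intro _h1 _h2
  -- the homomorphisms f i : T i →* P ⧸ C
  set f : ∀ i, T i →* (P ⧸ C.subgroupOf P) := fun i =>
    (QuotientGroup.mk' (C.subgroupOf P)).comp (Subgroup.inclusion (hTP i)) with hf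
  have hfker : ∀ i, C.subgroupOf (T i) ≤ (f i).ker := by
    intro i x hx
    rw [Subgroup.mem_subgroupOf] at hx
    rw [MonoidHom.mem_ker, hf]
    show QuotientGroup.mk' (C.subgroupOf P) (Subgroup.inclusion (hTP i) x) = 1
    rw [QuotientGroup.mk'_apply, QuotientGroup.eq_one_iff]
    rw [Subgroup.mem_subgroupOf, Subgroup.coe_inclusion]
    exact hx
  set φ : ∀ i, (T i ⧸ C.subgroupOf (T i)) →* (P ⧸ C.subgroupOf P) := fun i =>
    QuotientGroup.lift _ (f i) (hfker i) with hφ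
  have hφmk : ∀ i (x : T i), φ i (QuotientGroup.mk x) = f i x := fun i x => rfl
  -- commuting ranges
  have key : ∀ (i j : Fin k), i ≠ j → ∀ u v : P, (↑u : W) ∈ T i → (↑v : W) ∈ T j →
      QuotientGroup.mk' (C.subgroupOf P) u * QuotientGroup.mk' (C.subgroupOf P) v =
        QuotientGroup.mk' (C.subgroupOf P) v * QuotientGroup.mk' (C.subgroupOf P) u := by
    intro i j hij u v hu hv
    rw [← map_mul, ← map_mul, QuotientGroup.mk'_eq_mk']
    refine ⟨(u * v)⁻¹ * (v * u), ?_, by group⟩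
    rw [Subgroup.mem_subgroupOf]
    have hmem := hcommC i j hij (↑u) (↑v) hu hv
    have heq : ((↑((u * v)⁻¹ * (v * u)) : W)) = (↑v)⁻¹ * (↑u)⁻¹ * ↑v * ↑u := by
      push_cast
      group
    rw [heq]
    exact hmem
  have hcomm : Pairwise fun i j => ∀ (x : T i ⧸ C.subgroupOf (T i))
      (y : T j ⧸ C.subgroupOf (T j)), Commute (φ i x) (φ j y) := by
    intro i j hij x y
    refine QuotientGroup.induction_on x fun a => QuotientGroup.induction_on y fun b => ?_
    show φ i (QuotientGroup.mk a) * φ j (QuotientGroup.mk b)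
        = φ j (QuotientGroup.mk b) * φ i (QuotientGroup.mk a)
    rw [hφmk, hφmk]
    exact key i j hij _ _ (by rw [Subgroup.coe_inclusion]; exact a.2)
      (by rw [Subgroup.coe_inclusion]; exact b.2)
  -- ranges
  have hrange : ∀ i, (φ i).range = (f i).range := by
    intro i
    apply le_antisymm
    · rintro x ⟨q, rfl⟩
      exact QuotientGroup.induction_on q fun a => ⟨a, (hφmk i a).symm ▸ rfl⟩
    · rintro x ⟨a, rfl⟩
      exact ⟨QuotientGroup.mk a, hφmk i a⟩
  have hfr : ∀ i, (f i).range =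
      Subgroup.map (QuotientGroup.mk' (C.subgroupOf P)) ((T i).subgroupOf P) := by
    intro i
    rw [hf]
    show ((QuotientGroup.mk' (C.subgroupOf P)).comp (Subgroup.inclusion (hTP i))).range = _
    rw [MonoidHom.range_comp, Subgroup.inclusion_range]
  -- surjectivity
  set ψ := MonoidHom.noncommPiCoprod φ hcomm with hψ
  have hψr : ψ.range = ⊤ := by
    rw [hψ, MonoidHom.noncommPiCoprod_range, eq_top_iff]
    rintro q -
    refine QuotientGroup.induction_on q fun p => ?_
    have hp2 : (↑p : W) ∈ (P : Set W) := p.2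
    rw [hPcar] at hp2
    obtain ⟨t, ht, hp⟩ := hp2
    set t' : Fin k → P := fun i => ⟨t i, hTP i (ht i)⟩ with ht'
    have hp' : p = (List.ofFn t').prod := by
      apply Subtype.ext
      rw [coe_ofFn_prod]
      exact hp
    have hmk : (QuotientGroup.mk p : P ⧸ C.subgroupOf P)
        = (List.ofFn fun i => QuotientGroup.mk' (C.subgroupOf P) (t' i)).prod := by
      rw [hp']
      rw [show ((QuotientGroup.mk ((List.ofFn t').prod) : P ⧸ C.subgroupOf P))
          = QuotientGroup.mk' (C.subgroupOf P) ((List.ofFn t').prod) from rfl]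
      rw [map_list_prod, List.map_ofFn]
      rfl
    rw [hmk]
    refine Subgroup.list_prod_mem _ fun x hx => ?_
    rw [List.mem_ofFn] at hx
    obtain ⟨i, rfl⟩ := hx
    refine le_iSup (fun i => (φ i).range) i ?_
    show _ ∈ (φ i).range
    rw [hrange i, hfr i]
    exact ⟨t' i, Subgroup.mem_subgroupOf.mpr (ht i), rfl⟩
  have hsurj : Function.Surjective ψ := MonoidHom.range_eq_top.mp hψr
  -- independence
  have hind : iSupIndep fun i => (φ i).range := by
    rw [iSupIndep_def]
    intro i
    have h2 : (⨆ j, ⨆ _ : j ≠ i, (φ j).range) =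
        Subgroup.map (QuotientGroup.mk' (C.subgroupOf P))
          (⨆ j, ⨆ _ : j ≠ i, (T j).subgroupOf P) := by
      rw [Subgroup.map_iSup]
      refine iSup_congr fun j => ?_
      rw [Subgroup.map_iSup]
      exact iSup_congr fun hj => (hrange j).trans (hfr j)
    rw [Subgroup.disjoint_def]
    intro x hx hy
    rw [hrange i, hfr i] at hx
    rw [h2] at hy
    obtain ⟨u, hu, rfl⟩ := hx
    obtain ⟨v, hv, hvu⟩ := hy
    have hD : (⨆ j, ⨆ _ : j ≠ i, (T j).subgroupOf P) ≤ (S i).subgroupOf P := by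
      refine iSup_le fun j => iSup_le fun hj => ?_
      intro y hy'
      rw [Subgroup.mem_subgroupOf] at hy' ⊢
      exact hTS j i (Ne.symm hj) hy'
    have hvS : (↑v : W) ∈ S i := Subgroup.mem_subgroupOf.mp (hD hv)
    obtain ⟨z, hz, hzeq⟩ := (QuotientGroup.mk'_eq_mk' (C.subgroupOf P)).mp hvu
    have hzC : (↑z : W) ∈ C := Subgroup.mem_subgroupOf.mp hz
    have huW : (↑u : W) = ↑v * ↑z := by rw [← hzeq]; push_cast; rfl
    have huS : (↑u : W) ∈ S i := by
      rw [huW]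
      exact (S i).mul_mem hvS ((hCmem _).mp hzC i)
    have huC : (↑u : W) ∈ C := hTC i _ (Subgroup.mem_subgroupOf.mp hu) huS
    rw [QuotientGroup.mk'_apply, QuotientGroup.eq_one_iff]
    exact Subgroup.mem_subgroupOf.mpr huC
  -- injectivity of each φ i
  have hinjφ : ∀ i, Function.Injective (φ i) := by
    intro i x y
    refine QuotientGroup.induction_on x fun a => QuotientGroup.induction_on y fun b => fun h => ?_
    rw [hφmk, hφmk] at h
    have h' : QuotientGroup.mk' (C.subgroupOf P) (Subgroup.inclusion (hTP i) a) =
        QuotientGroup.mk' (C.subgroupOf P) (Subgroup.inclusion (hTP i) b) := h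
    obtain ⟨z, hz, hzeq⟩ := (QuotientGroup.mk'_eq_mk' (C.subgroupOf P)).mp h'
    have hzC : (↑z : W) ∈ C := Subgroup.mem_subgroupOf.mp hz
    have hcoe : (↑a : W) * ↑z = ↑b := by
      have := congrArg (fun x : P => (↑x : W)) hzeq
      simpa [Subgroup.coe_inclusion] using this
    refine (QuotientGroup.eq).mpr ?_
    rw [Subgroup.mem_subgroupOf]
    have : ((↑(a⁻¹ * b) : W)) = (↑a)⁻¹ * ↑b := by push_cast; rfl
    rw [this, ← hcoe]
    have : (↑a : W)⁻¹ * (↑a * ↑z) = ↑z := by group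
    rw [this]
    exact hzC
  have hinj : Function.Injective ψ :=
    MonoidHom.injective_noncommPiCoprod_of_iSupIndep (ϕ := φ) (hcomm := hcomm) hind hinjφ
  exact ⟨(MulEquiv.ofBijective ψ ⟨hinj, hsurj⟩).symm⟩
end

section
/- Let W be a group and S a subgroup with exactly k distinct conjugates S₁, …, S_k, and suppose the normal core C = S₁ ∩ ⋯ ∩ S_k has finite index in W. Let N = N_W(S₁) ∩ ⋯ ∩ N_W(S_k). Then [W : C] ≤ [W : N] · [N_W(S) : S]^k ≤ k! · [N_W(S) : S]^k. -/
section Aux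

variable {W : Type*} [Group W]

lemma conj_map_map_s7 (w v : W) (S : Subgroup W) :
    (S.map (MulAut.conj v).toMonoidHom).map (MulAut.conj w).toMonoidHom
      = S.map (MulAut.conj (w * v)).toMonoidHom := by
  rw [Subgroup.map_map]
  congr 1
  ext x
  simp [mul_assoc]

lemma conj_one_map (S : Subgroup W) : S.map (MulAut.conj (1 : W)).toMonoidHom = S := by
  ext x; simp

lemma mem_conjugates_map {S T : Subgroup W} (hT : T ∈ subgroupConjugates S) (w : W) :
    T.map (MulAut.conj w).toMonoidHom ∈ subgroupConjugates S := by
  obtain ⟨v, rfl⟩ := hT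
  exact ⟨w * v, (conj_map_map_s7 w v S).symm⟩

lemma map_conj_eq_iff {w : W} {T : Subgroup W} :
    T.map (MulAut.conj w).toMonoidHom = T ↔ w ∈ Subgroup.normalizer (T : Set W) := by
  constructor
  · intro h
    rw [Subgroup.mem_normalizer_iff]
    intro x
    constructor
    · intro hx
      rw [← h]
      exact ⟨x, hx, rfl⟩
    · intro hx
      rw [← h] at hx
      obtain ⟨y, hy, hxy⟩ := hx
      simp only [MulEquiv.coe_toMonoidHom, MulAut.conj_apply] at hxy
      have : y = x := by
        have := mul_left_cancel (a := w) (b := y * w⁻¹) (c := x * w⁻¹) (by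
          rw [← mul_assoc, ← mul_assoc, hxy])
        exact mul_right_cancel this
      rwa [this] at hy
  · intro h
    ext x
    simp only [Subgroup.mem_map, MulEquiv.coe_toMonoidHom, MulAut.conj_apply]
    rw [Subgroup.mem_normalizer_iff] at h
    constructor
    · rintro ⟨y, hy, rfl⟩
      exact (h y).1 hy
    · intro hx
      refine ⟨w⁻¹ * x * w, (h (w⁻¹ * x * w)).2 ?_, by group⟩
      have hxx : w * (w⁻¹ * x * w) * w⁻¹ = x := by group
      rwa [hxx]

lemma relindex_conj (w : W) (S : Subgroup W) :
    (S.map (MulAut.conj w).toMonoidHom).relIndex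
      (Subgroup.normalizer ((S.map (MulAut.conj w).toMonoidHom : Subgroup W) : Set W)) = S.relIndex (Subgroup.normalizer (S : Set W)) := by
  set e : W ≃* W := MulAut.conj w
  have hmap : S.map e.toMonoidHom = S.comap e.symm.toMonoidHom := by
    ext x
    simp only [Subgroup.mem_map, Subgroup.mem_comap, MulEquiv.coe_toMonoidHom, e,
      MulAut.conj_apply, MulAut.conj_symm_apply]
    constructor
    · rintro ⟨y, hy, rfl⟩
      have : w⁻¹ * (w * y * w⁻¹) * w = y := by group
      rwa [this]
    · intro hx
      exact ⟨w⁻¹ * x * w, hx, by group⟩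
  have hnorm : Subgroup.normalizer ((S.map e.toMonoidHom : Subgroup W) : Set W) = (Subgroup.normalizer (S : Set W)).map e.toMonoidHom :=
    (Subgroup.map_equiv_normalizer_eq S e).symm
  rw [hnorm, hmap, Subgroup.relIndex_comap]
  congr 1
  ext x
  simp [Subgroup.mem_map, MulEquiv.symm_apply_eq]

end Aux

/-- Let `S` be a subgroup of `W` with exactly `k` distinct conjugates, whose normal core `C`
(the intersection of all the conjugates) has finite index in `W`, and let `N` be the
intersection of the normalizers of all the conjugates.  Then
`[W : C] ≤ [W : N] · [N_W(S) : S]^k ≤ k! · [N_W(S) : S]^k`. -/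
theorem core_index_le {W : Type*} [Group W] (S : Subgroup W)
    (k : ℕ) (hfin : (subgroupConjugates S).Finite)
    (hcard : Nat.card (subgroupConjugates S) = k)
    (C : Subgroup W) (hC : C = ⨅ T ∈ subgroupConjugates S, T)
    (N : Subgroup W) (hN : N = ⨅ T ∈ subgroupConjugates S, Subgroup.normalizer T)
    (hCfin : C.FiniteIndex) :
    C.index ≤ N.index * (S.relIndex (Subgroup.normalizer (S : Set W))) ^ k ∧
      N.index * (S.relIndex (Subgroup.normalizer (S : Set W))) ^ k ≤
        Nat.factorial k * (S.relIndex (Subgroup.normalizer (S : Set W))) ^ k := by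
  haveI : Finite ↥(subgroupConjugates S) := hfin.to_subtype
  set r := S.relIndex (Subgroup.normalizer (S : Set W)) with hr
  -- the permutation action of `W` on the set of conjugates
  let φ : W →* Equiv.Perm ↥(subgroupConjugates S) :=
    { toFun := fun w =>
        { toFun := fun T => ⟨T.1.map (MulAut.conj w).toMonoidHom, mem_conjugates_map T.2 w⟩
          invFun := fun T => ⟨T.1.map (MulAut.conj w⁻¹).toMonoidHom, mem_conjugates_map T.2 w⁻¹⟩
          left_inv := fun T => Subtype.ext (by
            show ((T : Subgroup W).map (MulAut.conj w).toMonoidHom).map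
                (MulAut.conj w⁻¹).toMonoidHom = (T : Subgroup W)
            rw [conj_map_map_s7, inv_mul_cancel, conj_one_map])
          right_inv := fun T => Subtype.ext (by
            show ((T : Subgroup W).map (MulAut.conj w⁻¹).toMonoidHom).map
                (MulAut.conj w).toMonoidHom = (T : Subgroup W)
            rw [conj_map_map_s7, mul_inv_cancel, conj_one_map]) }
      map_one' := Equiv.ext fun T => Subtype.ext (conj_one_map _)
      map_mul' := fun w v => Equiv.ext fun T => Subtype.ext (conj_map_map_s7 w v T.1).symm }
  have hker : φ.ker = N := by
    ext w
    rw [MonoidHom.mem_ker, hN]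
    simp only [Subgroup.mem_iInf]
    rw [Equiv.ext_iff]
    constructor
    · intro h T hT
      have := h ⟨T, hT⟩
      rw [Subtype.ext_iff] at this
      exact map_conj_eq_iff.mp this
    · intro h T
      exact Subtype.ext (map_conj_eq_iff.mpr (h T.1 T.2))
  have hNle : N.index ≤ Nat.factorial k := by
    classical
    haveI : Fintype ↥(subgroupConjugates S) := hfin.fintype
    have h1 : N.index = Nat.card φ.range := by rw [← hker, Subgroup.index_ker]
    have h2 : Nat.card φ.range ≤ Nat.card (Equiv.Perm ↥(subgroupConjugates S)) :=
      Nat.card_le_card_of_injective _ Subtype.val_injective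
    have h3 : Nat.card (Equiv.Perm ↥(subgroupConjugates S)) = Nat.factorial k := by
      rw [Nat.card_eq_fintype_card, Fintype.card_perm, ← Nat.card_eq_fintype_card, hcard]
    omega
  have hCN : C ≤ N := by
    rw [hC, hN]
    exact le_iInf₂ fun T hT => le_trans (iInf₂_le T hT) T.le_normalizer
  have hCiInf : C = ⨅ T : ↥(subgroupConjugates S), (T : Subgroup W) := by
    rw [hC, iInf_subtype]
  have hCle : ∀ T : Subgroup W, T ∈ subgroupConjugates S → C ≤ T := by
    intro T hT
    rw [hC]
    exact iInf₂_le T hT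
  have hrel : C.relIndex N ≤ r ^ k := by
    haveI : Fintype ↥(subgroupConjugates S) := hfin.fintype
    rw [hCiInf]
    refine le_trans (Subgroup.relIndex_iInf_le _) ?_
    have hbound : ∀ T : ↥(subgroupConjugates S), (T : Subgroup W).relIndex N ≤ r := by
      intro T
      have hNsub : N ≤ Subgroup.normalizer ((T : Subgroup W) : Set W) := by
        rw [hN]; exact iInf₂_le T.1 T.2
      have hdvd : (T : Subgroup W).relIndex (Subgroup.normalizer ((T : Subgroup W) : Set W)) ∣
          (T : Subgroup W).index :=
        Subgroup.relIndex_dvd_index_of_le Subgroup.le_normalizer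
      have hTidx : (T : Subgroup W).index ≠ 0 := by
        intro h0
        have := Subgroup.index_dvd_of_le (hCle T.1 T.2)
        rw [h0] at this
        exact hCfin.index_ne_zero (Nat.eq_zero_of_zero_dvd this)
      have hne : (T : Subgroup W).relIndex (Subgroup.normalizer ((T : Subgroup W) : Set W)) ≠ 0 :=
        fun h0 => hTidx (Nat.eq_zero_of_zero_dvd (h0 ▸ hdvd))
      have := Subgroup.relIndex_le_of_le_right hNsub hne
      refine le_trans this ?_
      obtain ⟨v, hv⟩ := T.2
      rw [← hv, relindex_conj]
    calc ∏ T : ↥(subgroupConjugates S), (T : Subgroup W).relIndex N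
        ≤ ∏ _T : ↥(subgroupConjugates S), r :=
          Finset.prod_le_prod' fun T _ => hbound T
      _ = r ^ Fintype.card ↥(subgroupConjugates S) := by
          rw [Finset.prod_const, Finset.card_univ]
      _ = r ^ k := by rw [← Nat.card_eq_fintype_card, hcard]
  have hmul : C.relIndex N * N.index = C.index := Subgroup.relIndex_mul_index hCN
  constructor
  · calc C.index = C.relIndex N * N.index := hmul.symm
      _ ≤ r ^ k * N.index := Nat.mul_le_mul_right _ hrel
      _ = N.index * r ^ k := Nat.mul_comm _ _
  · exact Nat.mul_le_mul_right _ hNle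
end

section
/- Let R be an abstract polytope of rank n ≥ 2 whose automorphism group has exactly k₃ flag orbits, with k₃ finite. Suppose there is a fixed abstract polytope P of rank n−1 whose automorphism group has exactly k₁ flag orbits (k₁ finite) such that every facet-section of R is isomorphic to P, and a fixed abstract polytope Q of rank n−1 whose automorphism group has exactly k₂ flag orbits (k₂ finite) such that every vertex-figure of R is isomorphic to Q. Then lcm(k₁, k₂) divides k₃. -/
/-- `IsAbstractPolytope n P rk` says that the partially ordered set `P`, equipped with the
strictly monotone rank function `rk` taking values in `{-1, 0, …, n}`, is an abstract
polytope of rank `n`:  it has a unique minimal face of rank `-1` and a unique maximal face of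
rank `n`; every flag (maximal chain) contains exactly one face of each rank; the diamond
condition holds; and it is strongly connected. -/
structure IsAbstractPolytope (n : ℕ) (P : Type*) [PartialOrder P] (rk : P → ℤ) : Prop where
  /-- The rank function is strictly monotone. -/
  strictMono : StrictMono rk
  /-- There is a (necessarily unique) minimal face, of rank `-1`. -/
  exists_bot : ∃ B : P, rk B = -1 ∧ ∀ F : P, B ≤ F
  /-- There is a (necessarily unique) maximal face, of rank `n`. -/
  exists_top : ∃ T : P, rk T = (n : ℤ) ∧ ∀ F : P, F ≤ T
  /-- Every flag contains exactly one face of each rank `-1 ≤ j ≤ n`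
  (hence `n + 2` faces in all). -/
  flag_ranks : ∀ (Φ : Flag P) (j : ℤ), -1 ≤ j → j ≤ (n : ℤ) →
    ∃! F : P, F ∈ Φ ∧ rk F = j
  /-- Diamond condition: if `F < G` with `rk G = rk F + 2`, there are exactly two faces
  strictly between `F` and `G`. -/
  diamond : ∀ F G : P, F < G → rk G = rk F + 2 →
    ∃ H₁ H₂ : P, H₁ ≠ H₂ ∧ {H : P | F < H ∧ H < G} = {H₁, H₂}
  /-- Strong connectivity: if `F < G` with `rk G - rk F ≥ 3`, any two faces strictly between
  `F` and `G` are joined by a sequence of faces strictly between `F` and `G` in which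
  consecutive members are comparable. -/
  connected : ∀ F G H H' : P, F < G → rk F + 3 ≤ rk G →
    F < H → H < G → F < H' → H' < G →
    Relation.ReflTransGen
      (fun A B : P => F < A ∧ A < G ∧ F < B ∧ B < G ∧ (A ≤ B ∨ B ≤ A)) H H'

/-- Two flags are `i`-adjacent if they are distinct but agree in every face whose rank is
not `i` (so they differ exactly in their face of rank `i`). -/
def IAdjacent {P : Type*} [PartialOrder P] (rk : P → ℤ) (i : ℤ) (Φ Ψ : Flag P) : Prop :=
  Φ ≠ Ψ ∧ ∀ F : P, rk F ≠ i → (F ∈ Φ ↔ F ∈ Ψ)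

/-- Two flags are in the same orbit when some automorphism (order isomorphism) of `P` maps
one onto the other. -/
def flagOrbitRel (P : Type*) [PartialOrder P] (Φ Ψ : Flag P) : Prop :=
  ∃ σ : P ≃o P, ∀ F : P, F ∈ Ψ ↔ σ.symm F ∈ Φ

namespace APWork

open Set Relation

variable {n : ℕ} {P : Type*} [PartialOrder P] {rk : P → ℤ}

/-- membership in a mapped flag -/
lemma mem_map_iff {β : Type*} [PartialOrder β] (e : P ≃o β) (Φ : Flag P) (x : β) :
    x ∈ Flag.map e Φ ↔ e.symm x ∈ Φ := by
  constructor
  · rintro hx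
    have : x ∈ (e '' (Φ : Set P)) := hx
    rcases this with ⟨y, hy, rfl⟩
    simpa using hy
  · intro hx
    have : x ∈ (e '' (Φ : Set P)) := ⟨e.symm x, hx, by simp⟩
    exact this

lemma flag_eq_of_subset {Φ Ψ : Flag P} (h : (Φ : Set P) ⊆ (Ψ : Set P)) : Φ = Ψ :=
  Flag.ext (Φ.max_chain' Ψ.chain_le h)

lemma flag_exists_mem_not_mem {Φ Ψ : Flag P} (h : Φ ≠ Ψ) : ∃ x, x ∈ Φ ∧ x ∉ Ψ := by
  by_contra hc
  push_neg at hc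
  exact h (flag_eq_of_subset (fun x hx => hc x hx))

lemma exists_flag_mem (x : P) : ∃ Φ : Flag P, x ∈ Φ := by
  obtain ⟨M, hM, hsub⟩ := (IsChain.singleton (r := (· ≤ ·)) (a := x)).exists_maxChain
  exact ⟨Flag.ofIsMaxChain M hM, hsub rfl⟩

lemma exists_flag_pair {x y : P} (h : x ≤ y) : ∃ Φ : Flag P, x ∈ Φ ∧ y ∈ Φ := by
  rcases eq_or_ne x y with rfl | hne
  · obtain ⟨Φ, hΦ⟩ := exists_flag_mem x; exact ⟨Φ, hΦ, hΦ⟩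
  have hch : IsChain (· ≤ ·) ({x, y} : Set P) := by
    intro a ha b hb hab
    rcases ha with rfl | ha <;> rcases hb with rfl | hb <;> simp_all [h]
  obtain ⟨M, hM, hsub⟩ := hch.exists_maxChain
  exact ⟨Flag.ofIsMaxChain M hM, hsub (by simp), hsub (by simp)⟩

section Poly

variable (h : IsAbstractPolytope n P rk)
include h

lemma rk_ge (x : P) : -1 ≤ rk x := by
  obtain ⟨B, hB, hBle⟩ := h.exists_bot
  simpa [hB] using h.strictMono.monotone (hBle x)

lemma rk_le (x : P) : rk x ≤ (n : ℤ) := by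
  obtain ⟨T, hT, hTle⟩ := h.exists_top
  simpa [hT] using h.strictMono.monotone (hTle x)

lemma eq_of_le_of_rk_eq {x y : P} (hxy : x ≤ y) (hr : rk x = rk y) : x = y := by
  rcases eq_or_lt_of_le hxy with h' | h'
  · exact h'
  · exact absurd (h.strictMono h') (by omega)

lemma le_of_mem_of_rk_le {Φ : Flag P} {x y : P} (hx : x ∈ Φ) (hy : y ∈ Φ)
    (hr : rk x ≤ rk y) : x ≤ y := by
  rcases Φ.le_or_le hx hy with h' | h'
  · exact h'
  · have h2 := h.strictMono.monotone h'
    exact le_of_eq (eq_of_le_of_rk_eq h h' (by omega)).symm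

lemma eq_of_mem_of_rk_eq {Φ : Flag P} {x y : P} (hx : x ∈ Φ) (hy : y ∈ Φ)
    (hr : rk x = rk y) : x = y :=
  le_antisymm (le_of_mem_of_rk_le h hx hy hr.le) (le_of_mem_of_rk_le h hy hx hr.ge)

lemma bot_mem_flag (Φ : Flag P) : ∃ B, B ∈ Φ ∧ rk B = -1 ∧ ∀ F, B ≤ F := by
  obtain ⟨B, hB, hBle⟩ := h.exists_bot
  refine ⟨B, ?_, hB, hBle⟩
  exact Flag.mem_iff_forall_le_or_ge.2 (fun b _ => Or.inl (hBle b))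

lemma top_mem_flag (Φ : Flag P) : ∃ T, T ∈ Φ ∧ rk T = (n : ℤ) ∧ ∀ F, F ≤ T := by
  obtain ⟨T, hT, hTle⟩ := h.exists_top
  refine ⟨T, ?_, hT, hTle⟩
  exact Flag.mem_iff_forall_le_or_ge.2 (fun b _ => Or.inr (hTle b))

/-- counting faces below `x` in a flag computes the rank -/
lemma card_below {Φ : Flag P} {x : P} (hx : x ∈ Φ) :
    ({y | y ∈ Φ ∧ y ≤ x}.ncard : ℤ) = rk x + 2 := by
  have himg : rk '' {y | y ∈ Φ ∧ y ≤ x} = Set.Icc (-1 : ℤ) (rk x) := by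
    ext j
    constructor
    · rintro ⟨y, ⟨hyΦ, hyx⟩, rfl⟩
      exact ⟨rk_ge h y, h.strictMono.monotone hyx⟩
    · rintro ⟨hj1, hj2⟩
      obtain ⟨F, ⟨hFΦ, hFr⟩, -⟩ := h.flag_ranks Φ j hj1 (hj2.trans (rk_le h x))
      exact ⟨F, ⟨hFΦ, le_of_mem_of_rk_le h hFΦ hx (by omega)⟩, hFr⟩
  have hinj : Set.InjOn rk {y | y ∈ Φ ∧ y ≤ x} := by
    intro a ha b hb hab
    exact eq_of_mem_of_rk_eq h ha.1 hb.1 hab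
  have h1 : {y | y ∈ Φ ∧ y ≤ x}.ncard = (Set.Icc (-1 : ℤ) (rk x)).ncard := by
    rw [← himg, Set.ncard_image_of_injOn hinj]
  rw [h1, ← Finset.coe_Icc, Set.ncard_coe_finset]
  rw [Int.card_Icc_of_le _ _ (by have := rk_ge h x; omega)]
  ring

end Poly

/-- ranks are preserved by order isomorphisms between polytopes -/
lemma rk_map_eq {m' : ℕ} {P' : Type*} [PartialOrder P'] {rk' : P' → ℤ}
    (h : IsAbstractPolytope n P rk) (h' : IsAbstractPolytope m' P' rk')
    (e : P ≃o P') (x : P) : rk' (e x) = rk x := by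
  obtain ⟨Φ, hx⟩ := exists_flag_mem x
  have hx' : e x ∈ Flag.map e Φ := (mem_map_iff e Φ (e x)).2 (by simpa using hx)
  have h1 := card_below h hx
  have h2 := card_below h' hx'
  have himg : {y | y ∈ Flag.map e Φ ∧ y ≤ e x} = e '' {y | y ∈ Φ ∧ y ≤ x} := by
    ext z
    constructor
    · rintro ⟨hz, hzx⟩
      exact ⟨e.symm z, ⟨(mem_map_iff e Φ z).1 hz, by
        have := e.symm.monotone hzx; simpa using this⟩, by simp⟩
    · rintro ⟨y, ⟨hy, hyx⟩, rfl⟩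
      exact ⟨(mem_map_iff e Φ (e y)).2 (by simpa using hy), e.monotone hyx⟩
  rw [himg, Set.ncard_image_of_injective _ e.injective] at h2
  omega



section Face

variable (h : IsAbstractPolytope n P rk)
include h

lemma exists_face (Φ : Flag P) {j : ℤ} (h1 : -1 ≤ j) (h2 : j ≤ (n : ℤ)) :
    ∃ F, F ∈ Φ ∧ rk F = j :=
  (h.flag_ranks Φ j h1 h2).exists

/-- existence and uniqueness of the `i`-adjacent flag -/
lemma exists_unique_adjacent {i : ℤ} (hi0 : 0 ≤ i) (hi1 : i ≤ (n : ℤ) - 1) (Φ : Flag P) :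
    ∃! Ψ : Flag P, IAdjacent rk i Φ Ψ := by
  classical
  obtain ⟨F, hFm, hFr⟩ := exists_face h Φ (j := i - 1) (by omega) (by omega)
  obtain ⟨G, hGm, hGr⟩ := exists_face h Φ (j := i + 1) (by omega) (by omega)
  obtain ⟨X, hXm, hXr⟩ := exists_face h Φ (j := i) (by omega) (by omega)
  have hFG : F < G := lt_of_le_of_ne (le_of_mem_of_rk_le h hFm hGm (by omega))
    (fun e => by rw [e] at hFr; omega)
  obtain ⟨H₁, H₂, hne, hset⟩ := h.diamond F G hFG (by omega)
  have hXmem : X ∈ ({H₁, H₂} : Set P) := by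
    rw [← hset]
    exact ⟨lt_of_le_of_ne (le_of_mem_of_rk_le h hFm hXm (by omega))
        (fun e => by rw [e] at hFr; omega),
      lt_of_le_of_ne (le_of_mem_of_rk_le h hXm hGm (by omega))
        (fun e => by rw [e] at hXr; omega)⟩
  set Y : P := if X = H₁ then H₂ else H₁ with hY
  have hYmem : Y ∈ ({H₁, H₂} : Set P) := by
    rw [hY]; split <;> simp
  have hXY : X ≠ Y := by
    rw [hY]; split
    · simp_all
    · rcases hXmem with h' | h' <;> simp_all
  have hYint : F < Y ∧ Y < G := (Set.ext_iff.1 hset Y).2 hYmem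
  have hYr : rk Y = i := by
    have l1 := h.strictMono hYint.1
    have l2 := h.strictMono hYint.2
    omega
  set S : Set P := insert Y ((Φ : Set P) \ {X}) with hS
  have hScomp : ∀ z ∈ (Φ : Set P), z ≠ X → (z ≤ F ∨ G ≤ z) := by
    intro z hz hzX
    have hzr : rk z ≠ i := fun e => hzX (eq_of_mem_of_rk_eq h hz hXm (by omega))
    rcases lt_or_gt_of_ne hzr with h' | h'
    · exact Or.inl (le_of_mem_of_rk_le h hz hFm (by omega))
    · exact Or.inr (le_of_mem_of_rk_le h hGm hz (by omega))
  have hSchain : IsChain (· ≤ ·) S := by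
    intro a ha b hb hab
    rcases ha with rfl | ⟨ha, haX⟩
    · rcases hb with rfl | ⟨hb, hbX⟩
      · exact absurd rfl hab
      · rcases hScomp b hb (by simpa using hbX) with h' | h'
        · exact Or.inr (h'.trans hYint.1.le)
        · exact Or.inl (hYint.2.le.trans h')
    · rcases hb with rfl | ⟨hb, hbX⟩
      · rcases hScomp a ha (by simpa using haX) with h' | h'
        · exact Or.inl (h'.trans hYint.1.le)
        · exact Or.inr (hYint.2.le.trans h')
      · exact Φ.le_or_le ha hb
  have hYnotΦ : Y ∉ Φ := fun hc => hXY (eq_of_mem_of_rk_eq h hXm hc (by omega))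
  have hSmax : IsMaxChain (· ≤ ·) S := by
    refine ⟨hSchain, fun t ht hst => Set.Subset.antisymm hst ?_⟩
    intro w hw
    have hcomp : ∀ z ∈ S, w ≤ z ∨ z ≤ w := fun z hz => ht.total hw (hst hz)
    have hwr1 : -1 ≤ rk w := rk_ge h w
    have hwr2 : rk w ≤ (n : ℤ) := rk_le h w
    rcases eq_or_ne (rk w) i with hri | hri
    · have hYw : w ≤ Y ∨ Y ≤ w := hcomp Y (Set.mem_insert _ _)
      have hwY : w = Y := by
        rcases hYw with h' | h'
        · exact eq_of_le_of_rk_eq h h' (by omega)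
        · exact (eq_of_le_of_rk_eq h h' (by omega)).symm
      rw [hwY]; exact Set.mem_insert _ _
    · obtain ⟨Z, hZm, hZr⟩ := exists_face h Φ (j := rk w) hwr1 hwr2
      have hZX : Z ≠ X := fun e => hri (by rw [← hZr, e, hXr])
      have hZw : w ≤ Z ∨ Z ≤ w := hcomp Z (Set.mem_insert_of_mem _ ⟨hZm, hZX⟩)
      have hwZ : w = Z := by
        rcases hZw with h' | h'
        · exact eq_of_le_of_rk_eq h h' (by omega)
        · exact (eq_of_le_of_rk_eq h h' (by omega)).symm
      rw [hwZ]; exact Set.mem_insert_of_mem _ ⟨hZm, hZX⟩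
  set Ψ : Flag P := Flag.ofIsMaxChain S hSmax with hΨ
  have hadj : IAdjacent rk i Φ Ψ := by
    constructor
    · intro e
      have : Y ∈ Φ := by rw [e]; exact Set.mem_insert _ _
      exact hYnotΦ this
    · intro z hz
      constructor
      · intro hzΦ
        have hzX : z ≠ X := fun e => hz (by rw [e, hXr])
        exact Set.mem_insert_of_mem _ ⟨hzΦ, hzX⟩
      · intro hzΨ
        rcases hzΨ with rfl | ⟨hzΦ, -⟩
        · exact absurd hYr hz
        · exact hzΦ
  refine ⟨Ψ, hadj, ?_⟩
  intro Ψ' hadj'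
  have hXnot : X ∉ Ψ' := by
    intro hc
    apply hadj'.1
    apply flag_eq_of_subset
    intro z hz
    rcases eq_or_ne (rk z) i with hrz | hrz
    · rwa [eq_of_mem_of_rk_eq h hz hXm (by omega)]
    · exact (hadj'.2 z hrz).1 hz
  obtain ⟨Z, hZΨ', hZr⟩ := exists_face h Ψ' (j := i) (by omega) (by omega)
  have hFΨ' : F ∈ Ψ' := (hadj'.2 F (by omega)).1 hFm
  have hGΨ' : G ∈ Ψ' := (hadj'.2 G (by omega)).1 hGm
  have hZint : F < Z ∧ Z < G := by
    constructor
    · exact lt_of_le_of_ne (le_of_mem_of_rk_le h hFΨ' hZΨ' (by omega))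
        (fun e => by rw [e] at hFr; omega)
    · exact lt_of_le_of_ne (le_of_mem_of_rk_le h hZΨ' hGΨ' (by omega))
        (fun e => by rw [e] at hZr; omega)
  have hZmem : Z ∈ ({H₁, H₂} : Set P) := (Set.ext_iff.1 hset Z).1 hZint
  have hZX : Z ≠ X := fun e => hXnot (e ▸ hZΨ')
  have hZY : Z = Y := by
    rw [hY]; split
    · rcases hZmem with h' | h' <;> simp_all
    · rcases hXmem with h' | h' <;> rcases hZmem with h'' | h'' <;> simp_all
  apply (flag_eq_of_subset (Φ := Ψ) (Ψ := Ψ') ?_).symm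
  intro z hz
  rcases hz with rfl | ⟨hzΦ, hzX⟩
  · exact hZY ▸ hZΨ'
  · have hrz : rk z ≠ i := fun e =>
      (by simpa using hzX : z ≠ X) (eq_of_mem_of_rk_eq h hzΦ hXm (by omega))
    exact (hadj'.2 z hrz).1 hzΦ

end Face

lemma adj_symm {i : ℤ} {Φ Ψ : Flag P} (hadj : IAdjacent rk i Φ Ψ) :
    IAdjacent rk i Ψ Φ :=
  ⟨hadj.1.symm, fun F hF => (hadj.2 F hF).symm⟩

/-- the rank at which two adjacent flags differ lies strictly between the extremes -/
lemma adj_rank_range (h : IsAbstractPolytope n P rk) {i : ℤ} {Φ Ψ : Flag P}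
    (hadj : IAdjacent rk i Φ Ψ) : 0 ≤ i ∧ i ≤ (n : ℤ) - 1 := by
  obtain ⟨x, hxΦ, hxΨ⟩ := flag_exists_mem_not_mem hadj.1
  have hxr : rk x = i := by
    by_contra hc
    exact hxΨ ((hadj.2 x hc).1 hxΦ)
  obtain ⟨B, hBΨ, hBr, hBle⟩ := bot_mem_flag h Ψ
  obtain ⟨T, hTΨ, hTr, hTle⟩ := top_mem_flag h Ψ
  have hxB : x ≠ B := fun e => hxΨ (e ▸ hBΨ)
  have hxT : x ≠ T := fun e => hxΨ (e ▸ hTΨ)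
  have h1 : rk x ≠ -1 := by
    intro e
    exact hxB (eq_of_le_of_rk_eq h (hBle x) (by omega)).symm
  have h2 : rk x ≠ (n : ℤ) := by
    intro e
    exact hxT (eq_of_le_of_rk_eq h (hTle x) (by omega))
  have := rk_ge h x
  have := rk_le h x
  omega

/-- adjacency is preserved by rank-preserving order isomorphisms -/
lemma adj_map_iso {β : Type*} [PartialOrder β] {rk' : β → ℤ} (e : P ≃o β)
    (hrk : ∀ x, rk' (e x) = rk x) {i : ℤ} {Φ Ψ : Flag P}
    (hadj : IAdjacent rk i Φ Ψ) : IAdjacent rk' i (Flag.map e Φ) (Flag.map e Ψ) := by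
  constructor
  · intro hc
    exact hadj.1 ((Flag.map e).injective hc)
  · intro F hF
    have hFr : rk (e.symm F) ≠ i := by
      have := hrk (e.symm F); simp at this; omega
    rw [mem_map_iff, mem_map_iff]
    exact hadj.2 (e.symm F) hFr

open scoped Classical in
noncomputable def nextFlag (rk : P → ℤ) (i : ℤ) (Φ : Flag P) : Flag P :=
  if h : ∃! Ψ : Flag P, IAdjacent rk i Φ Ψ then h.exists.choose else Φ

lemma nextFlag_adj {i : ℤ} {Φ : Flag P} (hex : ∃! Ψ : Flag P, IAdjacent rk i Φ Ψ) :
    IAdjacent rk i Φ (nextFlag rk i Φ) := by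
  rw [nextFlag, dif_pos hex]
  exact hex.exists.choose_spec

lemma nextFlag_eq {i : ℤ} {Φ Ψ : Flag P} (hex : ∃! Ψ : Flag P, IAdjacent rk i Φ Ψ)
    (hadj : IAdjacent rk i Φ Ψ) : nextFlag rk i Φ = Ψ := by
  rw [nextFlag, dif_pos hex]
  exact (hex.unique hex.exists.choose_spec hadj)

lemma nextFlag_invol (h : IsAbstractPolytope n P rk) {i : ℤ} (hi0 : 0 ≤ i)
    (hi1 : i ≤ (n : ℤ) - 1) (Φ : Flag P) : nextFlag rk i (nextFlag rk i Φ) = Φ := by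
  have hex := exists_unique_adjacent h hi0 hi1 Φ
  have hex2 := exists_unique_adjacent h hi0 hi1 (nextFlag rk i Φ)
  exact nextFlag_eq hex2 (adj_symm (nextFlag_adj hex))

/-- `nextFlag` commutes with rank-preserving isomorphisms -/
lemma map_nextFlag {β : Type*} [PartialOrder β] {rk' : β → ℤ} (e : P ≃o β)
    (hrk : ∀ x, rk' (e x) = rk x) (i : ℤ) (Φ : Flag P) :
    Flag.map e (nextFlag rk i Φ) = nextFlag rk' i (Flag.map e Φ) := by
  classical
  have hrk' : ∀ y, rk (e.symm y) = rk' y := by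
    intro y; rw [← hrk (e.symm y)]; simp
  by_cases hex : ∃! Ψ : Flag P, IAdjacent rk i Φ Ψ
  · have hex' : ∃! Ψ' : Flag β, IAdjacent rk' i (Flag.map e Φ) Ψ' := by
      refine ⟨Flag.map e (nextFlag rk i Φ), adj_map_iso e hrk (nextFlag_adj hex), ?_⟩
      intro Ψ' hΨ'
      have h1 := adj_map_iso e.symm hrk' hΨ'
      rw [← Flag.symm_map] at h1
      rw [(Flag.map e).symm_apply_apply Φ] at h1
      have h3 : (Flag.map e).symm Ψ' = nextFlag rk i Φ := hex.unique h1 (nextFlag_adj hex)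
      rw [← h3]
      exact ((Flag.map e).apply_symm_apply Ψ').symm
    rw [nextFlag_eq hex' (adj_map_iso e hrk (nextFlag_adj hex))]
  · have hex' : ¬ ∃! Ψ' : Flag β, IAdjacent rk' i (Flag.map e Φ) Ψ' := by
      intro hc
      apply hex
      refine ⟨(Flag.map e).symm hc.exists.choose, ?_, ?_⟩
      · have h1 := adj_map_iso e.symm hrk' hc.exists.choose_spec
        rw [← Flag.symm_map] at h1
        rwa [(Flag.map e).symm_apply_apply Φ] at h1
      · intro Ψ hΨ
        have h2 := adj_map_iso e hrk hΨ
        have h3 := hc.unique h2 hc.exists.choose_spec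
        have h4 := congrArg (Flag.map e).symm h3
        rwa [(Flag.map e).symm_apply_apply] at h4
    rw [nextFlag, nextFlag, dif_neg hex, dif_neg hex']



/-! ### Sections -/

lemma mem_low_top (H : P) (L : Flag {x : P // x ≤ H}) : (⟨H, le_rfl⟩ : {x : P // x ≤ H}) ∈ L :=
  Flag.mem_iff_forall_le_or_ge.2 (fun b _ => Or.inr b.2)

lemma mem_up_bot (H : P) (U : Flag {x : P // H ≤ x}) : (⟨H, le_rfl⟩ : {x : P // H ≤ x}) ∈ U :=
  Flag.mem_iff_forall_le_or_ge.2 (fun b _ => Or.inl b.2)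

/-- transporting strong-connectivity paths into a subtype -/
lemma rtg_subtype {p : P → Prop} {F G A A' : {x : P // p x}}
    (hmem : ∀ x : P, (F : P) < x → x < (G : P) → p x)
    (hrtg : Relation.ReflTransGen
      (fun a b : P => (F : P) < a ∧ a < (G : P) ∧ (F : P) < b ∧ b < (G : P) ∧ (a ≤ b ∨ b ≤ a))
      (A : P) (A' : P)) :
    Relation.ReflTransGen
      (fun a b : {x : P // p x} => F < a ∧ a < G ∧ F < b ∧ b < G ∧ (a ≤ b ∨ b ≤ a)) A A' := by
  suffices hgen : ∀ b (_ : Relation.ReflTransGen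
      (fun a b : P => (F : P) < a ∧ a < (G : P) ∧ (F : P) < b ∧ b < (G : P) ∧ (a ≤ b ∨ b ≤ a))
      (A : P) b) (hbp : p b), Relation.ReflTransGen
      (fun a b : {x : P // p x} => F < a ∧ a < G ∧ F < b ∧ b < G ∧ (a ≤ b ∨ b ≤ a)) A ⟨b, hbp⟩ by
    have := hgen (A' : P) hrtg A'.2
    simpa using this
  intro b hb
  induction hb with
  | refl =>
    intro hbp
    have he : (⟨(A : P), hbp⟩ : {x : P // p x}) = A := Subtype.ext rfl
    rw [he]
  | tail hab hbc ih =>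
    intro hbp
    obtain ⟨h1, h2, h3, h4, h5⟩ := hbc
    have hbp' : p _ := hmem _ h1 h2
    refine Relation.ReflTransGen.tail (ih hbp') ?_
    refine ⟨Subtype.coe_lt_coe.1 h1, Subtype.coe_lt_coe.1 h2,
      Subtype.coe_lt_coe.1 h3, Subtype.coe_lt_coe.1 h4, ?_⟩
    rcases h5 with h5 | h5
    · exact Or.inl (Subtype.coe_le_coe.1 h5)
    · exact Or.inr (Subtype.coe_le_coe.1 h5)

section SecPoly

variable (h : IsAbstractPolytope n P rk)
include h

/-- the section below a face is an abstract polytope -/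
lemma lower_polytope (H : P) (hH : 0 ≤ rk H) :
    IsAbstractPolytope (rk H).toNat {x : P // x ≤ H} (fun x => rk ↑x) := by
  have hcast : (((rk H).toNat : ℕ) : ℤ) = rk H := Int.toNat_of_nonneg hH
  constructor
  · intro a b hab
    exact h.strictMono (Subtype.coe_lt_coe.2 hab)
  · obtain ⟨B, hB, hBle⟩ := h.exists_bot
    exact ⟨⟨B, hBle H⟩, hB, fun F => Subtype.coe_le_coe.1 (hBle ↑F)⟩
  · exact ⟨⟨H, le_rfl⟩, by show rk H = _; rw [hcast], fun F => F.2⟩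
  · intro L j hj1 hj2
    rw [hcast] at hj2
    have hchain : IsChain (· ≤ ·) (Subtype.val '' (L : Set {x : P // x ≤ H})) := by
      rintro a ⟨a', ha', rfl⟩ b ⟨b', hb', rfl⟩ hab
      rcases L.le_or_le ha' hb' with h' | h'
      · exact Or.inl h'
      · exact Or.inr h'
    obtain ⟨M, hM, hsub⟩ := hchain.exists_maxChain
    set Φ : Flag P := Flag.ofIsMaxChain M hM with hΦ
    have hHM : H ∈ Φ := hsub ⟨⟨H, le_rfl⟩, mem_low_top H L, rfl⟩
    obtain ⟨x, ⟨hxΦ, hxr⟩, huniq⟩ := h.flag_ranks Φ j hj1 (by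
      have := rk_le h H; omega)
    have hxH : x ≤ H := le_of_mem_of_rk_le h hxΦ hHM (by omega)
    -- the trace of Φ on the section equals L
    have htrace : (L : Set {x : P // x ≤ H}) = {y : {x : P // x ≤ H} | (y : P) ∈ Φ} := by
      apply L.max_chain'
      · intro a ha b hb hab
        rcases Φ.le_or_le ha hb with h' | h'
        · exact Or.inl (Subtype.coe_le_coe.1 h')
        · exact Or.inr (Subtype.coe_le_coe.1 h')
      · intro y hy
        exact hsub ⟨y, hy, rfl⟩
    refine ⟨⟨x, hxH⟩, ⟨?_, hxr⟩, ?_⟩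
    · show (⟨x, hxH⟩ : {x : P // x ≤ H}) ∈ (L : Set {x : P // x ≤ H})
      rw [htrace]; exact hxΦ
    · rintro y ⟨hy1, hy2⟩
      apply Subtype.ext
      apply huniq
      have : (y : P) ∈ Φ := by
        have : y ∈ (L : Set {x : P // x ≤ H}) := hy1
        rw [htrace] at this; exact this
      exact ⟨this, hy2⟩
  · rintro F G hFG hrk
    obtain ⟨H₁, H₂, hne, hset⟩ := h.diamond ↑F ↑G (Subtype.coe_lt_coe.2 hFG) hrk
    have hm1 : (F : P) < H₁ ∧ H₁ < (G : P) := (Set.ext_iff.1 hset H₁).2 (by simp)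
    have hm2 : (F : P) < H₂ ∧ H₂ < (G : P) := (Set.ext_iff.1 hset H₂).2 (by simp)
    refine ⟨⟨H₁, hm1.2.le.trans G.2⟩, ⟨H₂, hm2.2.le.trans G.2⟩, ?_, ?_⟩
    · intro hc; exact hne (congrArg Subtype.val hc)
    · ext K
      constructor
      · rintro ⟨hk1, hk2⟩
        have : (K : P) ∈ ({H₁, H₂} : Set P) := by
          rw [← hset]
          exact ⟨Subtype.coe_lt_coe.2 hk1, Subtype.coe_lt_coe.2 hk2⟩
        rcases this with h' | h'
        · exact Or.inl (Subtype.ext h')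
        · exact Or.inr (Subtype.ext h')
      · rintro (rfl | rfl)
        · exact ⟨Subtype.coe_lt_coe.1 hm1.1, Subtype.coe_lt_coe.1 hm1.2⟩
        · exact ⟨Subtype.coe_lt_coe.1 hm2.1, Subtype.coe_lt_coe.1 hm2.2⟩
  · intro F G A A' h1 h2 h3 h4 h5 h6
    have hrtg := h.connected ↑F ↑G ↑A ↑A' (Subtype.coe_lt_coe.2 h1) h2
      (Subtype.coe_lt_coe.2 h3) (Subtype.coe_lt_coe.2 h4)
      (Subtype.coe_lt_coe.2 h5) (Subtype.coe_lt_coe.2 h6)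
    exact rtg_subtype (fun x hFx hxG => hxG.le.trans G.2) hrtg

/-- the section above a face is an abstract polytope -/
lemma upper_polytope (H : P) (hH : rk H ≤ (n : ℤ) - 1) :
    IsAbstractPolytope ((n : ℤ) - rk H - 1).toNat {x : P // H ≤ x}
      (fun x => rk ↑x - rk H - 1) := by
  have hcast : ((((n : ℤ) - rk H - 1).toNat : ℕ) : ℤ) = (n : ℤ) - rk H - 1 :=
    Int.toNat_of_nonneg (by omega)
  constructor
  · intro a b hab
    have := h.strictMono (Subtype.coe_lt_coe.2 hab)
    show rk ↑a - rk H - 1 < rk ↑b - rk H - 1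
    omega
  · exact ⟨⟨H, le_rfl⟩, by show rk H - rk H - 1 = -1; omega, fun F => Subtype.coe_le_coe.1 F.2⟩
  · obtain ⟨T, hT, hTle⟩ := h.exists_top
    refine ⟨⟨T, hTle H⟩, by show rk T - rk H - 1 = _; rw [hcast, hT], fun F => Subtype.coe_le_coe.1 (hTle ↑F)⟩
  · intro U j hj1 hj2
    rw [hcast] at hj2
    have hchain : IsChain (· ≤ ·) (Subtype.val '' (U : Set {x : P // H ≤ x})) := by
      rintro a ⟨a', ha', rfl⟩ b ⟨b', hb', rfl⟩ hab
      rcases U.le_or_le ha' hb' with h' | h'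
      · exact Or.inl h'
      · exact Or.inr h'
    obtain ⟨M, hM, hsub⟩ := hchain.exists_maxChain
    set Φ : Flag P := Flag.ofIsMaxChain M hM with hΦ
    have hHM : H ∈ Φ := hsub ⟨⟨H, le_rfl⟩, mem_up_bot H U, rfl⟩
    obtain ⟨x, ⟨hxΦ, hxr⟩, huniq⟩ := h.flag_ranks Φ (j + rk H + 1)
      (by have := rk_ge h H; omega) (by omega)
    have hxH : H ≤ x := le_of_mem_of_rk_le h hHM hxΦ (by omega)
    have htrace : (U : Set {x : P // H ≤ x}) = {y : {x : P // H ≤ x} | (y : P) ∈ Φ} := by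
      apply U.max_chain'
      · intro a ha b hb hab
        rcases Φ.le_or_le ha hb with h' | h'
        · exact Or.inl (Subtype.coe_le_coe.1 h')
        · exact Or.inr (Subtype.coe_le_coe.1 h')
      · intro y hy
        exact hsub ⟨y, hy, rfl⟩
    refine ⟨⟨x, hxH⟩, ⟨?_, by show rk x - rk H - 1 = j; omega⟩, ?_⟩
    · show (⟨x, hxH⟩ : {x : P // H ≤ x}) ∈ (U : Set {x : P // H ≤ x})
      rw [htrace]; exact hxΦ
    · rintro y ⟨hy1, hy2⟩
      apply Subtype.ext
      apply huniq
      have hyΦ : (y : P) ∈ Φ := by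
        have : y ∈ (U : Set {x : P // H ≤ x}) := hy1
        rw [htrace] at this; exact this
      exact ⟨hyΦ, by have h9 : rk (y:P) - rk H - 1 = j := hy2; omega⟩
  · rintro F G hFG hrk
    obtain ⟨H₁, H₂, hne, hset⟩ := h.diamond ↑F ↑G (Subtype.coe_lt_coe.2 hFG) (by omega)
    have hm1 : (F : P) < H₁ ∧ H₁ < (G : P) := (Set.ext_iff.1 hset H₁).2 (by simp)
    have hm2 : (F : P) < H₂ ∧ H₂ < (G : P) := (Set.ext_iff.1 hset H₂).2 (by simp)
    refine ⟨⟨H₁, F.2.trans hm1.1.le⟩, ⟨H₂, F.2.trans hm2.1.le⟩, ?_, ?_⟩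
    · intro hc; exact hne (congrArg Subtype.val hc)
    · ext K
      constructor
      · rintro ⟨hk1, hk2⟩
        have : (K : P) ∈ ({H₁, H₂} : Set P) := by
          rw [← hset]
          exact ⟨Subtype.coe_lt_coe.2 hk1, Subtype.coe_lt_coe.2 hk2⟩
        rcases this with h' | h'
        · exact Or.inl (Subtype.ext h')
        · exact Or.inr (Subtype.ext h')
      · rintro (rfl | rfl)
        · exact ⟨Subtype.coe_lt_coe.1 hm1.1, Subtype.coe_lt_coe.1 hm1.2⟩
        · exact ⟨Subtype.coe_lt_coe.1 hm2.1, Subtype.coe_lt_coe.1 hm2.2⟩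
  · intro F G A A' h1 h2 h3 h4 h5 h6
    have hrtg := h.connected ↑F ↑G ↑A ↑A' (Subtype.coe_lt_coe.2 h1) (by omega)
      (Subtype.coe_lt_coe.2 h3) (Subtype.coe_lt_coe.2 h4)
      (Subtype.coe_lt_coe.2 h5) (Subtype.coe_lt_coe.2 h6)
    exact rtg_subtype (fun x hFx hxG => F.2.trans hFx.le) hrtg


end SecPoly

/-! ### Restriction and gluing of flags -/

def lowFlag (H : P) (Φ : Flag P) (hH : H ∈ Φ) : Flag {x : P // x ≤ H} where
  carrier := {y | (y : P) ∈ Φ}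
  Chain' := by
    intro a ha b hb hab
    rcases Φ.le_or_le ha hb with h' | h'
    · exact Or.inl (Subtype.coe_le_coe.1 h')
    · exact Or.inr (Subtype.coe_le_coe.1 h')
  max_chain' := by
    intro s hs hsub
    apply Set.Subset.antisymm hsub
    intro w hw
    show (w : P) ∈ Φ
    rw [Flag.mem_iff_forall_le_or_ge]
    intro b hb
    rcases Φ.le_or_le hb hH with hbH | hbH
    · have hbs : (⟨b, hbH⟩ : {x : P // x ≤ H}) ∈ s := hsub hb
      rcases hs.total hw hbs with h'' | h''
      · exact Or.inl (Subtype.coe_le_coe.2 h'')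
      · exact Or.inr (Subtype.coe_le_coe.2 h'')
    · exact Or.inl (w.2.trans hbH)

def upFlag (H : P) (Φ : Flag P) (hH : H ∈ Φ) : Flag {x : P // H ≤ x} where
  carrier := {y | (y : P) ∈ Φ}
  Chain' := by
    intro a ha b hb hab
    rcases Φ.le_or_le ha hb with h' | h'
    · exact Or.inl (Subtype.coe_le_coe.1 h')
    · exact Or.inr (Subtype.coe_le_coe.1 h')
  max_chain' := by
    intro s hs hsub
    apply Set.Subset.antisymm hsub
    intro w hw
    show (w : P) ∈ Φ
    rw [Flag.mem_iff_forall_le_or_ge]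
    intro b hb
    rcases Φ.le_or_le hH hb with hbH | hbH
    · have hbs : (⟨b, hbH⟩ : {x : P // H ≤ x}) ∈ s := hsub hb
      rcases hs.total hw hbs with h'' | h''
      · exact Or.inl (Subtype.coe_le_coe.2 h'')
      · exact Or.inr (Subtype.coe_le_coe.2 h'')
    · exact Or.inr (hbH.trans w.2)

def glueFlag (H : P) (L : Flag {x : P // x ≤ H}) (U : Flag {x : P // H ≤ x}) : Flag P where
  carrier := (Subtype.val '' (L : Set {x : P // x ≤ H})) ∪
    (Subtype.val '' (U : Set {x : P // H ≤ x}))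
  Chain' := by
    rintro a (⟨a', ha', rfl⟩ | ⟨a', ha', rfl⟩) b (⟨b', hb', rfl⟩ | ⟨b', hb', rfl⟩) hab
    · rcases L.le_or_le ha' hb' with h' | h'
      · exact Or.inl h'
      · exact Or.inr h'
    · exact Or.inl (a'.2.trans b'.2)
    · exact Or.inr (b'.2.trans a'.2)
    · rcases U.le_or_le ha' hb' with h' | h'
      · exact Or.inl h'
      · exact Or.inr h'
  max_chain' := by
    intro s hs hsub
    apply Set.Subset.antisymm hsub
    intro w hw
    have hHs : H ∈ s := hsub (Or.inl ⟨⟨H, le_rfl⟩, mem_low_top H L, rfl⟩)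
    rcases hs.total hw hHs with hwH | hwH
    · left
      refine ⟨⟨w, hwH⟩, ?_, rfl⟩
      rw [Flag.mem_coe_iff, Flag.mem_iff_forall_le_or_ge]
      intro b hb
      have hbs : (b : P) ∈ s := hsub (Or.inl ⟨b, hb, rfl⟩)
      rcases hs.total hw hbs with h'' | h''
      · exact Or.inl (Subtype.coe_le_coe.2 h'')
      · exact Or.inr (Subtype.coe_le_coe.2 h'')
    · right
      refine ⟨⟨w, hwH⟩, ?_, rfl⟩
      rw [Flag.mem_coe_iff, Flag.mem_iff_forall_le_or_ge]
      intro b hb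
      have hbs : (b : P) ∈ s := hsub (Or.inr ⟨b, hb, rfl⟩)
      rcases hs.total hw hbs with h'' | h''
      · exact Or.inl (Subtype.coe_le_coe.2 h'')
      · exact Or.inr (Subtype.coe_le_coe.2 h'')

lemma mem_glueFlag {H : P} {L : Flag {x : P // x ≤ H}} {U : Flag {x : P // H ≤ x}} {w : P} :
    w ∈ glueFlag H L U ↔ (∃ y ∈ L, (y : P) = w) ∨ (∃ y ∈ U, (y : P) = w) := by
  constructor
  · rintro (⟨y, hy, rfl⟩ | ⟨y, hy, rfl⟩)
    · exact Or.inl ⟨y, hy, rfl⟩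
    · exact Or.inr ⟨y, hy, rfl⟩
  · rintro (⟨y, hy, rfl⟩ | ⟨y, hy, rfl⟩)
    · exact Or.inl ⟨y, hy, rfl⟩
    · exact Or.inr ⟨y, hy, rfl⟩

lemma mem_lowFlag {H : P} {Φ : Flag P} {hH : H ∈ Φ} {y : {x : P // x ≤ H}} :
    y ∈ lowFlag H Φ hH ↔ (y : P) ∈ Φ := Iff.rfl

lemma mem_upFlag {H : P} {Φ : Flag P} {hH : H ∈ Φ} {y : {x : P // H ≤ x}} :
    y ∈ upFlag H Φ hH ↔ (y : P) ∈ Φ := Iff.rfl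

lemma glue_low_up {H : P} {Φ : Flag P} (hH : H ∈ Φ) :
    glueFlag H (lowFlag H Φ hH) (upFlag H Φ hH) = Φ := by
  apply Flag.ext
  ext w
  rw [Flag.mem_coe_iff, mem_glueFlag]
  constructor
  · rintro (⟨y, hy, rfl⟩ | ⟨y, hy, rfl⟩)
    · exact hy
    · exact hy
  · intro hw
    rcases Φ.le_or_le hw hH with h' | h'
    · exact Or.inl ⟨⟨w, h'⟩, hw, rfl⟩
    · exact Or.inr ⟨⟨w, h'⟩, hw, rfl⟩

lemma glue_adj_low {H : P} {L L' : Flag {x : P // x ≤ H}} (U : Flag {x : P // H ≤ x}) {i : ℤ}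
    (hadj : IAdjacent (fun y : {x : P // x ≤ H} => rk ↑y) i L L') :
    IAdjacent rk i (glueFlag H L U) (glueFlag H L' U) := by
  constructor
  · obtain ⟨x, hxL, hxL'⟩ := flag_exists_mem_not_mem hadj.1
    intro hc
    have hx1 : (x : P) ∈ glueFlag H L U := mem_glueFlag.2 (Or.inl ⟨x, hxL, rfl⟩)
    rw [hc] at hx1
    rcases mem_glueFlag.1 hx1 with ⟨y, hy, hyx⟩ | ⟨y, hy, hyx⟩
    · exact hxL' (by rwa [show y = x from Subtype.ext hyx] at hy)
    · have hxH : (x : P) = H := le_antisymm x.2 (hyx ▸ y.2)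
      have : x = (⟨H, le_rfl⟩ : {x : P // x ≤ H}) := Subtype.ext hxH
      exact hxL' (this ▸ mem_low_top H L')
  · intro z hz
    rw [mem_glueFlag, mem_glueFlag]
    constructor
    · rintro (⟨y, hy, rfl⟩ | hy)
      · exact Or.inl ⟨y, (hadj.2 y hz).1 hy, rfl⟩
      · exact Or.inr hy
    · rintro (⟨y, hy, rfl⟩ | hy)
      · exact Or.inl ⟨y, (hadj.2 y hz).2 hy, rfl⟩
      · exact Or.inr hy

lemma glue_adj_up {H : P} (L : Flag {x : P // x ≤ H}) {U U' : Flag {x : P // H ≤ x}} {i : ℤ}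
    (hadj : IAdjacent (fun y : {x : P // H ≤ x} => rk ↑y - rk H - 1) i U U') :
    IAdjacent rk (i + rk H + 1) (glueFlag H L U) (glueFlag H L U') := by
  constructor
  · obtain ⟨x, hxU, hxU'⟩ := flag_exists_mem_not_mem hadj.1
    intro hc
    have hx1 : (x : P) ∈ glueFlag H L U := mem_glueFlag.2 (Or.inr ⟨x, hxU, rfl⟩)
    rw [hc] at hx1
    rcases mem_glueFlag.1 hx1 with ⟨y, hy, hyx⟩ | ⟨y, hy, hyx⟩
    · have hxH : (x : P) = H := le_antisymm (hyx ▸ y.2) x.2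
      have : x = (⟨H, le_rfl⟩ : {x : P // H ≤ x}) := Subtype.ext hxH
      exact hxU' (this ▸ mem_up_bot H U')
    · exact hxU' (by rwa [show y = x from Subtype.ext hyx] at hy)
  · intro z hz
    rw [mem_glueFlag, mem_glueFlag]
    have hz' : ∀ y : {x : P // H ≤ x}, (y : P) = z → rk (y : P) - rk H - 1 ≠ i := by
      rintro y rfl hc
      exact hz (by omega)
    constructor
    · rintro (hy | ⟨y, hy, rfl⟩)
      · exact Or.inl hy
      · exact Or.inr ⟨y, (hadj.2 y (hz' y rfl)).1 hy, rfl⟩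
    · rintro (hy | ⟨y, hy, rfl⟩)
      · exact Or.inl hy
      · exact Or.inr ⟨y, (hadj.2 y (hz' y rfl)).2 hy, rfl⟩

def Conn (rk : P → ℤ) : Flag P → Flag P → Prop :=
  Relation.ReflTransGen (fun Φ Ψ => ∃ i, IAdjacent rk i Φ Ψ)

lemma conn_glue_low {H : P} (U : Flag {x : P // H ≤ x}) {L L' : Flag {x : P // x ≤ H}}
    (hc : Conn (fun y : {x : P // x ≤ H} => rk ↑y) L L') :
    Conn rk (glueFlag H L U) (glueFlag H L' U) :=
  Relation.ReflTransGen.lift (fun L => glueFlag H L U)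
    (fun _ _ ⟨i, hadj⟩ => ⟨i, glue_adj_low U hadj⟩) _ _ hc

lemma conn_glue_up {H : P} (L : Flag {x : P // x ≤ H}) {U U' : Flag {x : P // H ≤ x}}
    (hc : Conn (fun y : {x : P // H ≤ x} => rk ↑y - rk H - 1) U U') :
    Conn rk (glueFlag H L U) (glueFlag H L U') :=
  Relation.ReflTransGen.lift (fun U => glueFlag H L U)
    (fun _ _ ⟨i, hadj⟩ => ⟨i + rk H + 1, glue_adj_up L hadj⟩) _ _ hc


/-- every abstract polytope is flag-connected -/
theorem flag_conn : ∀ (m : ℕ) {α : Type u} [inst : PartialOrder α] (rkα : α → ℤ)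
    (h : IsAbstractPolytope m α rkα) (Φ Ψ : Flag α), Conn rkα Φ Ψ := by
  intro m
  induction m using Nat.strong_induction_on with
  | _ m IH =>
  intro α inst rkα h Φ Ψ
  -- flags sharing a common proper face are connected
  have common : ∀ (H : α), 0 ≤ rkα H → rkα H ≤ (m : ℤ) - 1 →
      ∀ (Φ' Ψ' : Flag α) (hΦ' : H ∈ Φ') (hΨ' : H ∈ Ψ'), Conn rkα Φ' Ψ' := by
    intro H h0 h1 Φ' Ψ' hΦ' hΨ'
    have hlowpoly := lower_polytope h H h0
    have huppoly := upper_polytope h H h1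
    have hlow : Conn (fun y : {x : α // x ≤ H} => rkα ↑y)
        (lowFlag H Φ' hΦ') (lowFlag H Ψ' hΨ') :=
      IH (rkα H).toNat (by omega) _ hlowpoly _ _
    have hup : Conn (fun y : {x : α // H ≤ x} => rkα ↑y - rkα H - 1)
        (upFlag H Φ' hΦ') (upFlag H Ψ' hΨ') :=
      IH ((m : ℤ) - rkα H - 1).toNat (by omega) _ huppoly _ _
    have step1 : Conn rkα (glueFlag H (lowFlag H Φ' hΦ') (upFlag H Φ' hΦ'))
        (glueFlag H (lowFlag H Ψ' hΨ') (upFlag H Φ' hΦ')) :=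
      conn_glue_low (upFlag H Φ' hΦ') hlow
    have step2 : Conn rkα (glueFlag H (lowFlag H Ψ' hΨ') (upFlag H Φ' hΦ'))
        (glueFlag H (lowFlag H Ψ' hΨ') (upFlag H Ψ' hΨ')) :=
      conn_glue_up (lowFlag H Ψ' hΨ') hup
    have := step1.trans step2
    rwa [glue_low_up hΦ', glue_low_up hΨ'] at this
  by_cases hm2 : 2 ≤ m
  · -- main case: use strong connectivity between vertices
    obtain ⟨B, hBr, hBle⟩ := h.exists_bot
    obtain ⟨T, hTr, hTle⟩ := h.exists_top
    obtain ⟨v, hvΦ, hvr⟩ := exists_face h Φ (j := 0) (by omega) (by omega)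
    obtain ⟨v', hvΨ, hvr'⟩ := exists_face h Ψ (j := 0) (by omega) (by omega)
    have hBT : B < T := lt_of_le_of_ne (hBle T) (fun e => by rw [e] at hBr; omega)
    have hBv : B < v := lt_of_le_of_ne (hBle v) (fun e => by rw [e] at hBr; omega)
    have hvT : v < T := lt_of_le_of_ne (hTle v) (fun e => by rw [← e] at hTr; omega)
    have hBv' : B < v' := lt_of_le_of_ne (hBle v') (fun e => by rw [e] at hBr; omega)
    have hvT' : v' < T := lt_of_le_of_ne (hTle v') (fun e => by rw [← e] at hTr; omega)
    have hrtg := h.connected B T v v' hBT (by omega) hBv hvT hBv' hvT'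
    have main : ∀ w, Relation.ReflTransGen
        (fun A C : α => B < A ∧ A < T ∧ B < C ∧ C < T ∧ (A ≤ C ∨ C ≤ A)) v w →
        ∀ Ω : Flag α, w ∈ Ω → Conn rkα Φ Ω := by
      intro w hw
      induction hw with
      | refl =>
        intro Ω hΩ
        exact common v (by omega) (by omega) Φ Ω hvΦ hΩ
      | tail hab hbc ih =>
        rename_i b c
        obtain ⟨h1, h2, h3, h4, h5⟩ := hbc
        intro Ω hΩ
        have hcex : ∃ Ω' : Flag α, b ∈ Ω' ∧ c ∈ Ω' := by
          rcases h5 with h5 | h5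
          · exact exists_flag_pair h5
          · obtain ⟨Ω', hc1, hc2⟩ := exists_flag_pair h5
            exact ⟨Ω', hc2, hc1⟩
        obtain ⟨Ω', hbΩ', hcΩ'⟩ := hcex
        have c1 : Conn rkα Φ Ω' := ih Ω' hbΩ'
        have hc0 : 0 ≤ rkα c := by
          have := h.strictMono h3; omega
        have hc1' : rkα c ≤ (m : ℤ) - 1 := by
          have := h.strictMono h4; omega
        exact c1.trans (common c hc0 hc1' Ω' Ω hcΩ' hΩ)
    exact main v' hrtg Ψ hvΨ
  · -- degenerate ranks 0 and 1
    rcases eq_or_ne Φ Ψ with rfl | hne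
    · exact Relation.ReflTransGen.refl
    obtain ⟨B, hBr, hBle⟩ := h.exists_bot
    obtain ⟨T, hTr, hTle⟩ := h.exists_top
    have hBΦ : B ∈ Φ := Flag.mem_iff_forall_le_or_ge.2 (fun b _ => Or.inl (hBle b))
    have hBΨ : B ∈ Ψ := Flag.mem_iff_forall_le_or_ge.2 (fun b _ => Or.inl (hBle b))
    have hTΦ : T ∈ Φ := Flag.mem_iff_forall_le_or_ge.2 (fun b _ => Or.inr (hTle b))
    have hTΨ : T ∈ Ψ := Flag.mem_iff_forall_le_or_ge.2 (fun b _ => Or.inr (hTle b))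
    have hext : ∀ z : α, rkα z ≠ 0 → (z ∈ Φ ↔ z ∈ Ψ) := by
      intro z hz
      have hz1 := rk_ge h z
      have hz2 := rk_le h z
      have : z = B ∨ z = T := by
        rcases eq_or_ne (rkα z) (-1) with hz' | hz'
        · exact Or.inl (eq_of_le_of_rk_eq h (hBle z) (by omega)).symm
        · have : rkα z = (m : ℤ) := by omega
          exact Or.inr (eq_of_le_of_rk_eq h (hTle z) (by omega))
      rcases this with rfl | rfl
      · exact ⟨fun _ => hBΨ, fun _ => hBΦ⟩
      · exact ⟨fun _ => hTΨ, fun _ => hTΦ⟩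
    exact Relation.ReflTransGen.single ⟨0, hne, hext⟩


/-! ### Flag orbits -/

lemma orbit_iff {Φ Ψ : Flag P} :
    flagOrbitRel P Φ Ψ ↔ ∃ σ : P ≃o P, Flag.map σ Φ = Ψ := by
  constructor
  · rintro ⟨σ, hσ⟩
    refine ⟨σ, ?_⟩
    apply Flag.ext
    ext x
    rw [Flag.mem_coe_iff, Flag.mem_coe_iff, mem_map_iff, ← hσ x]
  · rintro ⟨σ, rfl⟩
    exact ⟨σ, fun F => mem_map_iff σ Φ F⟩

lemma orbit_refl (Φ : Flag P) : flagOrbitRel P Φ Φ :=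
  orbit_iff.2 ⟨OrderIso.refl P, by
    apply Flag.ext
    ext x
    rw [Flag.mem_coe_iff, Flag.mem_coe_iff, mem_map_iff]
    rfl⟩

/-- the key divisibility lemma -/
lemma dvd_aux {R T : Type*} [PartialOrder R] [PartialOrder T] {n : ℕ} (hn : 2 ≤ n)
    (rkR : R → ℤ) (hR : IsAbstractPolytope n R rkR)
    (rkT : T → ℤ) (hT : IsAbstractPolytope (n - 1) T rkT)
    (ρ : Flag R → Flag T) (δ : ℤ) (hδ0 : 0 ≤ δ) (hδ1 : δ ≤ 1)
    (hadj : ∀ i : ℤ, 0 ≤ i → i ≤ (n : ℤ) - 2 → ∀ Φ Ψ : Flag R,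
      IAdjacent rkR (i + δ) Φ Ψ → IAdjacent rkT i (ρ Φ) (ρ Ψ))
    (hequiv : ∀ (σ : R ≃o R) (Φ : Flag R), flagOrbitRel T (ρ Φ) (ρ (Flag.map σ Φ)))
    (k k' : ℕ) (hfinT : Finite (Quot (flagOrbitRel T)))
    (hkT : Nat.card (Quot (flagOrbitRel T)) = k)
    (hfinR : Finite (Quot (flagOrbitRel R)))
    (hkR : Nat.card (Quot (flagOrbitRel R)) = k') : k ∣ k' := by
  have hcast : (((n - 1 : ℕ) : ℤ)) = (n : ℤ) - 1 := by
    have : 1 ≤ n := by omega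
    omega
  -- the induced map on orbits
  have gwd : ∀ Φ Ψ : Flag R, flagOrbitRel R Φ Ψ →
      (Quot.mk (flagOrbitRel T) (ρ Φ)) = Quot.mk (flagOrbitRel T) (ρ Ψ) := by
    intro Φ Ψ hrel
    obtain ⟨σ, rfl⟩ := orbit_iff.1 hrel
    exact Quot.sound (hequiv σ Φ)
  set gbar : Quot (flagOrbitRel R) → Quot (flagOrbitRel T) :=
    Quot.lift (fun Φ => Quot.mk (flagOrbitRel T) (ρ Φ)) gwd with hgbar
  -- adjacency moves on orbit spaces
  have aRwd : ∀ (i : ℤ) (Φ Ψ : Flag R), flagOrbitRel R Φ Ψ →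
      (Quot.mk (flagOrbitRel R) (nextFlag rkR i Φ)) =
        Quot.mk (flagOrbitRel R) (nextFlag rkR i Ψ) := by
    intro i Φ Ψ hrel
    obtain ⟨σ, rfl⟩ := orbit_iff.1 hrel
    rw [← map_nextFlag σ (fun x => rk_map_eq hR hR σ x) i Φ]
    exact Quot.sound (orbit_iff.2 ⟨σ, rfl⟩)
  have aTwd : ∀ (i : ℤ) (Φ Ψ : Flag T), flagOrbitRel T Φ Ψ →
      (Quot.mk (flagOrbitRel T) (nextFlag rkT i Φ)) =
        Quot.mk (flagOrbitRel T) (nextFlag rkT i Ψ) := by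
    intro i Φ Ψ hrel
    obtain ⟨σ, rfl⟩ := orbit_iff.1 hrel
    rw [← map_nextFlag σ (fun x => rk_map_eq hT hT σ x) i Φ]
    exact Quot.sound (orbit_iff.2 ⟨σ, rfl⟩)
  set aR : ℤ → Quot (flagOrbitRel R) → Quot (flagOrbitRel R) :=
    fun i => Quot.lift (fun Φ => Quot.mk (flagOrbitRel R) (nextFlag rkR i Φ)) (aRwd i)
    with haR
  set aT : ℤ → Quot (flagOrbitRel T) → Quot (flagOrbitRel T) :=
    fun i => Quot.lift (fun Φ => Quot.mk (flagOrbitRel T) (nextFlag rkT i Φ)) (aTwd i)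
    with haT
  -- intertwining relation
  have hintw : ∀ i : ℤ, 0 ≤ i → i ≤ (n : ℤ) - 2 → ∀ x,
      gbar (aR (i + δ) x) = aT i (gbar x) := by
    intro i hi0 hi1 x
    obtain ⟨Φ, rfl⟩ := Quot.exists_rep x
    rw [hgbar, haR, haT]
    show Quot.mk _ (ρ (nextFlag rkR (i + δ) Φ)) = Quot.mk _ (nextFlag rkT i (ρ Φ))
    have hexR := exists_unique_adjacent hR (i := i + δ) (by omega) (by omega) Φ
    have hexT := exists_unique_adjacent hT (i := i) (by omega) (by rw [hcast]; omega) (ρ Φ)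
    rw [nextFlag_eq hexT (hadj i hi0 hi1 _ _ (nextFlag_adj hexR))]
  have haRinvol : ∀ i : ℤ, 0 ≤ i → i ≤ (n : ℤ) - 1 → ∀ x, aR i (aR i x) = x := by
    intro i hi0 hi1 x
    obtain ⟨Φ, rfl⟩ := Quot.exists_rep x
    rw [haR]
    show Quot.mk _ (nextFlag rkR i (nextFlag rkR i Φ)) = _
    rw [nextFlag_invol hR hi0 hi1]
  have haTinvol : ∀ i : ℤ, 0 ≤ i → i ≤ (n : ℤ) - 2 → ∀ x, aT i (aT i x) = x := by
    intro i hi0 hi1 x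
    obtain ⟨Φ, rfl⟩ := Quot.exists_rep x
    rw [haT]
    show Quot.mk _ (nextFlag rkT i (nextFlag rkT i Φ)) = _
    rw [nextFlag_invol hT hi0 (by rw [hcast]; omega)]
  -- fibre cardinalities
  set c : Quot (flagOrbitRel T) → ℕ :=
    fun o => Nat.card {x : Quot (flagOrbitRel R) // gbar x = o} with hc
  have hstep : ∀ i : ℤ, 0 ≤ i → i ≤ (n : ℤ) - 2 → ∀ o, c (aT i o) = c o := by
    intro i hi0 hi1 o
    have e : {x : Quot (flagOrbitRel R) // gbar x = o} ≃
        {x : Quot (flagOrbitRel R) // gbar x = aT i o} :=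
      { toFun := fun x => ⟨aR (i + δ) x.1, by rw [hintw i hi0 hi1, x.2]⟩
        invFun := fun x => ⟨aR (i + δ) x.1, by
          rw [hintw i hi0 hi1, x.2, haTinvol i hi0 hi1]⟩
        left_inv := fun x => Subtype.ext (haRinvol (i + δ) (by omega) (by omega) x.1)
        right_inv := fun x => Subtype.ext (haRinvol (i + δ) (by omega) (by omega) x.1) }
    exact (Nat.card_congr e).symm
  -- all fibres have the same cardinality
  have hconst : ∀ o o', c o = c o' := by
    intro o o'
    obtain ⟨φ, rfl⟩ := Quot.exists_rep o
    obtain ⟨ψ, rfl⟩ := Quot.exists_rep o'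
    have hconn := flag_conn (n - 1) rkT hT φ ψ
    induction hconn with
    | refl => rfl
    | tail hab hbc ih =>
      rename_i b d
      obtain ⟨i, hadj'⟩ := hbc
      obtain ⟨hi0, hi1⟩ := adj_rank_range hT hadj'
      rw [hcast] at hi1
      have hexT := exists_unique_adjacent hT (i := i) hi0 (by rw [hcast]; omega) b
      have hmk : Quot.mk (flagOrbitRel T) d = aT i (Quot.mk (flagOrbitRel T) b) := by
        rw [haT]
        show _ = Quot.mk _ (nextFlag rkT i b)
        rw [nextFlag_eq hexT hadj']
      have hs := hstep i hi0 (by omega)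
      rw [hmk]
      exact ih.trans (hs _).symm
  -- conclude by counting
  obtain ⟨B, hB, -⟩ := hT.exists_bot
  obtain ⟨Φ₀, -⟩ := exists_flag_mem B
  set o₀ : Quot (flagOrbitRel T) := Quot.mk _ Φ₀ with ho₀
  haveI : Finite (Quot (flagOrbitRel R)) := hfinR
  haveI : Finite (Quot (flagOrbitRel T)) := hfinT
  have hfib : ∀ o, Nonempty ({x : Quot (flagOrbitRel R) // gbar x = o} ≃
      {x : Quot (flagOrbitRel R) // gbar x = o₀}) := by
    intro o
    exact Finite.card_eq.1 (hconst o o₀)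
  have e1 : Quot (flagOrbitRel R) ≃
      ((Σ o : Quot (flagOrbitRel T), {x : Quot (flagOrbitRel R) // gbar x = o})) :=
    (Equiv.sigmaFiberEquiv gbar).symm
  have e2 : ((Σ o : Quot (flagOrbitRel T), {x : Quot (flagOrbitRel R) // gbar x = o})) ≃
      ((Σ _ : Quot (flagOrbitRel T), {x : Quot (flagOrbitRel R) // gbar x = o₀})) :=
    Equiv.sigmaCongrRight (fun o => (hfib o).some)
  have e3 : ((Σ _ : Quot (flagOrbitRel T), {x : Quot (flagOrbitRel R) // gbar x = o₀})) ≃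
      (Quot (flagOrbitRel T) × {x : Quot (flagOrbitRel R) // gbar x = o₀}) :=
    Equiv.sigmaEquivProd _ _
  have hcount : k' = k * Nat.card {x : Quot (flagOrbitRel R) // gbar x = o₀} := by
    rw [← hkR, ← hkT, Nat.card_congr ((e1.trans e2).trans e3), Nat.card_prod]
  exact ⟨_, hcount⟩


lemma orbit_map_low {β : Type*} [PartialOrder β] (σ : P ≃o P) (Φ : Flag P) (F : P)
    (hFΦ : F ∈ Φ) (hmemσ : σ F ∈ Flag.map σ Φ)
    (e : {H : P // H ≤ F} ≃o β) (e' : {H : P // H ≤ σ F} ≃o β) :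
    flagOrbitRel β (Flag.map e (lowFlag F Φ hFΦ))
      (Flag.map e' (lowFlag (σ F) (Flag.map σ Φ) hmemσ)) := by
  let σres : {H : P // H ≤ F} ≃o {H : P // H ≤ σ F} :=
    { toFun := fun y => ⟨σ ↑y, σ.monotone y.2⟩
      invFun := fun z => ⟨σ.symm ↑z, by
        have := σ.symm.monotone z.2
        simpa using this⟩
      left_inv := fun y => Subtype.ext (by simp)
      right_inv := fun z => Subtype.ext (by simp)
      map_rel_iff' := by
        intro a b
        exact ⟨fun hab => by simpa using σ.le_iff_le.1 hab,
          fun hab => by exact σ.monotone hab⟩ }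
  refine orbit_iff.2 ⟨(e.symm.trans σres).trans e', ?_⟩
  apply Flag.ext
  ext x
  rw [Flag.mem_coe_iff, Flag.mem_coe_iff, mem_map_iff, mem_map_iff, mem_map_iff,
    mem_lowFlag, mem_lowFlag, mem_map_iff]
  simp only [OrderIso.symm_trans_apply, OrderIso.symm_symm, OrderIso.symm_apply_apply]
  rfl

lemma orbit_map_up {β : Type*} [PartialOrder β] (σ : P ≃o P) (Φ : Flag P) (v : P)
    (hvΦ : v ∈ Φ) (hmemσ : σ v ∈ Flag.map σ Φ)
    (e : {H : P // v ≤ H} ≃o β) (e' : {H : P // σ v ≤ H} ≃o β) :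
    flagOrbitRel β (Flag.map e (upFlag v Φ hvΦ))
      (Flag.map e' (upFlag (σ v) (Flag.map σ Φ) hmemσ)) := by
  let σres : {H : P // v ≤ H} ≃o {H : P // σ v ≤ H} :=
    { toFun := fun y => ⟨σ ↑y, σ.monotone y.2⟩
      invFun := fun z => ⟨σ.symm ↑z, by
        have := σ.symm.monotone z.2
        simpa using this⟩
      left_inv := fun y => Subtype.ext (by simp)
      right_inv := fun z => Subtype.ext (by simp)
      map_rel_iff' := by
        intro a b
        exact ⟨fun hab => by simpa using σ.le_iff_le.1 hab,
          fun hab => by exact σ.monotone hab⟩ }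
  refine orbit_iff.2 ⟨(e.symm.trans σres).trans e', ?_⟩
  apply Flag.ext
  ext x
  rw [Flag.mem_coe_iff, Flag.mem_coe_iff, mem_map_iff, mem_map_iff, mem_map_iff,
    mem_upFlag, mem_upFlag, mem_map_iff]
  simp only [OrderIso.symm_trans_apply, OrderIso.symm_symm, OrderIso.symm_apply_apply]
  rfl


end APWork

/-- Let `R` be an abstract polytope of rank `n ≥ 2` with exactly `k₃` flag orbits (`k₃`
finite).  Suppose every facet-section of `R` is isomorphic to a fixed rank-`(n-1)` polytope
`P` having exactly `k₁` flag orbits, and every vertex-figure of `R` is isomorphic to a fixed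
rank-`(n-1)` polytope `Q` having exactly `k₂` flag orbits (`k₁`, `k₂` finite).  Then
`lcm(k₁, k₂)` divides `k₃`. -/
theorem lcm_dvd_orbit_count_of_amalgamation (n : ℕ) (hn : 2 ≤ n)
    {R : Type*} [PartialOrder R] (rkR : R → ℤ) (hR : IsAbstractPolytope n R rkR)
    {P : Type*} [PartialOrder P] (rkP : P → ℤ) (hP : IsAbstractPolytope (n - 1) P rkP)
    {Q : Type*} [PartialOrder Q] (rkQ : Q → ℤ) (hQ : IsAbstractPolytope (n - 1) Q rkQ)
    (k₁ k₂ k₃ : ℕ)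
    (hfinP : Finite (Quot (flagOrbitRel P))) (hk₁ : Nat.card (Quot (flagOrbitRel P)) = k₁)
    (hfinQ : Finite (Quot (flagOrbitRel Q))) (hk₂ : Nat.card (Quot (flagOrbitRel Q)) = k₂)
    (hfinR : Finite (Quot (flagOrbitRel R))) (hk₃ : Nat.card (Quot (flagOrbitRel R)) = k₃)
    (hfacets : ∀ F : R, rkR F = (n : ℤ) - 1 → Nonempty ({H : R // H ≤ F} ≃o P))
    (hvertexfigs : ∀ v : R, rkR v = 0 → Nonempty ({H : R // v ≤ H} ≃o Q)) :
    Nat.lcm k₁ k₂ ∣ k₃ := by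
  classical
  open APWork in
  -- facet divisibility
  have div1 : k₁ ∣ k₃ := by
    have hface : ∀ Φ : Flag R, ∃ F, F ∈ Φ ∧ rkR F = (n : ℤ) - 1 := fun Φ =>
      exists_face hR Φ (j := (n : ℤ) - 1) (by omega) (by omega)
    choose fc hfc1 hfc2 using hface
    have E : ∀ (F : R), rkR F = (n : ℤ) - 1 → ({H : R // H ≤ F} ≃o P) :=
      fun F hF => (hfacets F hF).some
    set ρ : Flag R → Flag P :=
      fun Φ => Flag.map (E (fc Φ) (hfc2 Φ)) (lowFlag (fc Φ) Φ (hfc1 Φ)) with hρ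
    have hρeq : ∀ (Ψ : Flag R) (F : R) (hF : rkR F = (n : ℤ) - 1) (hmem : F ∈ Ψ),
        fc Ψ = F → ρ Ψ = Flag.map (E F hF) (lowFlag F Ψ hmem) := by
      rintro Ψ F hF hmem heq
      subst heq
      rfl
    have hrkE : ∀ (F : R) (hF : rkR F = (n : ℤ) - 1) (y : {H : R // H ≤ F}),
        rkP (E F hF y) = rkR ↑y := by
      intro F hF y
      exact rk_map_eq (lower_polytope hR F (by omega)) hP (E F hF) y
    have hadjρ : ∀ i : ℤ, 0 ≤ i → i ≤ (n : ℤ) - 2 → ∀ Φ Ψ : Flag R,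
        IAdjacent rkR (i + 0) Φ Ψ → IAdjacent rkP i (ρ Φ) (ρ Ψ) := by
      intro i hi0 hi1 Φ Ψ hadjR
      rw [add_zero] at hadjR
      have hF := hfc2 Φ
      have hFΦ := hfc1 Φ
      have hFΨ : fc Φ ∈ Ψ := (hadjR.2 (fc Φ) (by omega)).1 hFΦ
      have hfcΨ : fc Ψ = fc Φ :=
        eq_of_mem_of_rk_eq hR (hfc1 Ψ) hFΨ (by rw [hfc2 Ψ, hF])
      rw [hρeq Ψ (fc Φ) hF hFΨ hfcΨ, hρeq Φ (fc Φ) hF hFΦ rfl]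
      apply adj_map_iso (E (fc Φ) hF) (hrkE (fc Φ) hF)
      constructor
      · obtain ⟨x, hxΦ, hxΨ⟩ := flag_exists_mem_not_mem hadjR.1
        have hxr : rkR x = i := by
          by_contra hc
          exact hxΨ ((hadjR.2 x hc).1 hxΦ)
        have hxF : x ≤ fc Φ := le_of_mem_of_rk_le hR hxΦ hFΦ (by omega)
        intro hc
        have hx1 : (⟨x, hxF⟩ : {H : R // H ≤ fc Φ}) ∈ lowFlag (fc Φ) Φ hFΦ := hxΦ
        rw [hc] at hx1
        exact hxΨ hx1
      · intro y hy
        exact hadjR.2 (y : R) hy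
    have hequivρ : ∀ (σ : R ≃o R) (Φ : Flag R), flagOrbitRel P (ρ Φ) (ρ (Flag.map σ Φ)) := by
      intro σ Φ
      have hσrk : ∀ x : R, rkR (σ x) = rkR x := fun x => rk_map_eq hR hR σ x
      have hσF : rkR (σ (fc Φ)) = (n : ℤ) - 1 := by rw [hσrk, hfc2 Φ]
      have hmem : σ (fc Φ) ∈ Flag.map σ Φ := by
        rw [mem_map_iff]
        simpa using hfc1 Φ
      have hfcmap : fc (Flag.map σ Φ) = σ (fc Φ) :=
        eq_of_mem_of_rk_eq hR (hfc1 _) hmem (by rw [hfc2 _, hσF])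
      rw [hρeq (Flag.map σ Φ) (σ (fc Φ)) hσF hmem hfcmap,
        hρeq Φ (fc Φ) (hfc2 Φ) (hfc1 Φ) rfl]
      exact orbit_map_low σ Φ (fc Φ) (hfc1 Φ) hmem (E (fc Φ) (hfc2 Φ)) (E (σ (fc Φ)) hσF)
    exact dvd_aux hn rkR hR rkP hP ρ 0 le_rfl (by omega) hadjρ hequivρ
      k₁ k₃ hfinP hk₁ hfinR hk₃
  -- vertex-figure divisibility
  have div2 : k₂ ∣ k₃ := by
    have hvert : ∀ Φ : Flag R, ∃ v, v ∈ Φ ∧ rkR v = 0 := fun Φ =>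
      exists_face hR Φ (j := 0) (by omega) (by omega)
    choose vc hvc1 hvc2 using hvert
    have E : ∀ (v : R), rkR v = 0 → ({H : R // v ≤ H} ≃o Q) :=
      fun v hv => (hvertexfigs v hv).some
    set ρ : Flag R → Flag Q :=
      fun Φ => Flag.map (E (vc Φ) (hvc2 Φ)) (upFlag (vc Φ) Φ (hvc1 Φ)) with hρ
    have hρeq : ∀ (Ψ : Flag R) (v : R) (hv : rkR v = 0) (hmem : v ∈ Ψ),
        vc Ψ = v → ρ Ψ = Flag.map (E v hv) (upFlag v Ψ hmem) := by
      rintro Ψ v hv hmem heq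
      subst heq
      rfl
    have hrkE : ∀ (v : R) (hv : rkR v = 0) (y : {H : R // v ≤ H}),
        rkQ (E v hv y) = rkR ↑y - rkR v - 1 := by
      intro v hv y
      exact rk_map_eq (upper_polytope hR v (by omega)) hQ (E v hv) y
    have hadjρ : ∀ i : ℤ, 0 ≤ i → i ≤ (n : ℤ) - 2 → ∀ Φ Ψ : Flag R,
        IAdjacent rkR (i + 1) Φ Ψ → IAdjacent rkQ i (ρ Φ) (ρ Ψ) := by
      intro i hi0 hi1 Φ Ψ hadjR
      have hv := hvc2 Φ
      have hvΦ := hvc1 Φ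
      have hvΨ : vc Φ ∈ Ψ := (hadjR.2 (vc Φ) (by omega)).1 hvΦ
      have hvcΨ : vc Ψ = vc Φ :=
        eq_of_mem_of_rk_eq hR (hvc1 Ψ) hvΨ (by rw [hvc2 Ψ, hv])
      rw [hρeq Ψ (vc Φ) hv hvΨ hvcΨ, hρeq Φ (vc Φ) hv hvΦ rfl]
      have hrk' : ∀ y : {H : R // vc Φ ≤ H},
          rkQ (E (vc Φ) hv y) = (fun y : {H : R // vc Φ ≤ H} => rkR ↑y - rkR (vc Φ) - 1) y :=
        hrkE (vc Φ) hv
      apply adj_map_iso (E (vc Φ) hv) hrk'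
      constructor
      · obtain ⟨x, hxΦ, hxΨ⟩ := flag_exists_mem_not_mem hadjR.1
        have hxr : rkR x = i + 1 := by
          by_contra hc
          exact hxΨ ((hadjR.2 x hc).1 hxΦ)
        have hxv : vc Φ ≤ x := le_of_mem_of_rk_le hR hvΦ hxΦ (by omega)
        intro hc
        have hx1 : (⟨x, hxv⟩ : {H : R // vc Φ ≤ H}) ∈ upFlag (vc Φ) Φ hvΦ := hxΦ
        rw [hc] at hx1
        exact hxΨ hx1
      · intro y hy
        have hy' : rkR (y : R) ≠ i + 1 := by
          have : rkR (y : R) - rkR (vc Φ) - 1 ≠ i := hy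
          omega
        exact hadjR.2 (y : R) hy'
    have hequivρ : ∀ (σ : R ≃o R) (Φ : Flag R), flagOrbitRel Q (ρ Φ) (ρ (Flag.map σ Φ)) := by
      intro σ Φ
      have hσrk : ∀ x : R, rkR (σ x) = rkR x := fun x => rk_map_eq hR hR σ x
      have hσv : rkR (σ (vc Φ)) = 0 := by rw [hσrk, hvc2 Φ]
      have hmem : σ (vc Φ) ∈ Flag.map σ Φ := by
        rw [mem_map_iff]
        simpa using hvc1 Φ
      have hvcmap : vc (Flag.map σ Φ) = σ (vc Φ) :=
        eq_of_mem_of_rk_eq hR (hvc1 _) hmem (by rw [hvc2 _, hσv])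
      rw [hρeq (Flag.map σ Φ) (σ (vc Φ)) hσv hmem hvcmap,
        hρeq Φ (vc Φ) (hvc2 Φ) (hvc1 Φ) rfl]
      exact orbit_map_up σ Φ (vc Φ) (hvc1 Φ) hmem (E (vc Φ) (hvc2 Φ)) (E (σ (vc Φ)) hσv)
    exact dvd_aux hn rkR hR rkQ hQ ρ 1 (by omega) le_rfl hadjρ hequivρ
      k₂ k₃ hfinQ hk₂ hfinR hk₃
  exact Nat.lcm_dvd div1 div2
end
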